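/- arXiv:1107.2802 — 6 statements merged into one kernel-verified Lean document; each statement's English description precedes it below -/
import Mathlib

section
/- Assume the TAR(1) model with zero intercepts, α = 1 and β < 1, and suppose E|Y₀|^p < ∞ and E|ε₁|^p < ∞ for some p > 0. Then there exists a constant C (depending only on p, β and r, not on n or A) such that for every n ≥ 1 and every event A: E[ |Y_n|^p · 1{Y_n ≤ r} · 1_A ] ≤ C ( sup_{k≥1} E[ |ε_k|^p · 1_A ] + E[ |Y₀|^p · 1_A ] + P(A) ). -/
open MeasureTheory ProbabilityTheory Filter
open scoped Topology NNReal ENNReal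

noncomputable section

/-- The TAR(1) model with zero intercepts:
`Y (t+1) = α * Y t + ε (t+1)` if `Y t > r`, and `Y (t+1) = β * Y t + ε (t+1)` if `Y t ≤ r`,
where `{ε t : t ≥ 1}` is an i.i.d. sequence with mean zero and variance `σ² ∈ (0, ∞)`, and the
initial value `Y 0` is independent of the innovation sequence. -/
structure IsTAR1 {Ω : Type*} [MeasurableSpace Ω] (μ : Measure Ω)
    (α β r σ : ℝ) (ε : ℕ → Ω → ℝ) (Y : ℕ → Ω → ℝ) : Prop where
  isProb : IsProbabilityMeasure μ
  meas_eps : ∀ t, Measurable (ε t)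
  meas_Y0 : Measurable (Y 0)
  ident : ∀ s t, IdentDistrib (ε s) (ε t) μ μ
  indep : iIndepFun ε μ
  indep_Y0 : IndepFun (Y 0) (fun ω t => ε t ω) μ
  integrable : Integrable (ε 1) μ
  mean_zero : ∫ ω, ε 1 ω ∂μ = 0
  sq_int : MemLp (ε 1) 2 μ
  variance_eq : variance (ε 1) μ = σ ^ 2
  sigma_pos : 0 < σ
  recursion : ∀ t ω, Y (t + 1) ω =
    (if r < Y t ω then α * Y t ω else β * Y t ω) + ε (t + 1) ω

set_option maxHeartbeats 1000000 in
/-- Lemma 3.1: if `α = 1`, `β < 1`, `E|Y₀|^p < ∞` and `E|ε₁|^p < ∞` for some `p > 0`, there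
is a constant `C` (depending only on `p`, `β`, `r`) such that for every `n ≥ 1` and every
event `A`, `E[|Y_n|^p 1{Y_n ≤ r} 1_A] ≤ C (sup_k E[|ε_k|^p 1_A] + E[|Y₀|^p 1_A] + P(A))`. -/
theorem tar1_truncated_moment_bound
    {Ω : Type*} [MeasurableSpace Ω] {μ : Measure Ω} {α β r σ : ℝ} {ε Y : ℕ → Ω → ℝ}
    (hTAR : IsTAR1 μ α β r σ ε Y)
    (hα : α = 1) (hβ : β < 1) {p : ℝ} (hp : 0 < p)
    (hY0p : Integrable (fun ω => |Y 0 ω| ^ p) μ)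
    (hεp : Integrable (fun ω => |ε 1 ω| ^ p) μ) :
    ∃ C : ℝ, 0 < C ∧ ∀ n : ℕ, 1 ≤ n → ∀ A : Set Ω, MeasurableSet A →
      ∫ ω in A ∩ {ω | Y n ω ≤ r}, |Y n ω| ^ p ∂μ ≤
        C * ((⨆ k : ℕ, ∫ ω in A, |ε (k + 1) ω| ^ p ∂μ) +
          (∫ ω in A, |Y 0 ω| ^ p ∂μ) + (μ A).toReal) := by
  classical
  have hprob := hTAR.isProb
  -- basic constants (introduced as opaque variables with defining equations)
  obtain ⟨βp, hβpdef⟩ : ∃ x : ℝ, x = max β 0 := ⟨_, rfl⟩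
  have hβp0 : 0 ≤ βp := hβpdef ▸ le_max_right _ _
  have hβp1 : βp < 1 := hβpdef ▸ max_lt hβ one_pos
  obtain ⟨c, hcdef⟩ : ∃ x : ℝ, x = (1 + |β|) * |r| := ⟨_, rfl⟩
  have hc0 : 0 ≤ c := by rw [hcdef]; positivity
  have hcr : |r| ≤ c := by rw [hcdef]; nlinarith [abs_nonneg β, abs_nonneg r]
  obtain ⟨θ, hθdef⟩ : ∃ x : ℝ, x = (1 + βp) / 2 := ⟨_, rfl⟩
  have hθ0 : 0 < θ := by rw [hθdef]; linarith
  have hθβ : βp < θ := by rw [hθdef]; linarith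
  have hθ1 : θ < 1 := by rw [hθdef]; linarith
  have hθβ' : 0 < θ - βp := by linarith
  obtain ⟨q, hqdef⟩ : ∃ x : ℝ, x = θ ^ p := ⟨_, rfl⟩
  have hq0 : 0 < q := hqdef ▸ Real.rpow_pos_of_pos hθ0 p
  have hq1 : q < 1 := hqdef ▸ Real.rpow_lt_one hθ0.le hθ1 hp
  obtain ⟨K₀, hK₀def⟩ : ∃ x : ℝ, x = βp / (θ - βp) + 1 := ⟨_, rfl⟩
  have hK₀0 : 0 < K₀ := by
    rw [hK₀def]
    have : 0 ≤ βp / (θ - βp) := div_nonneg hβp0 hθβ'.le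
    linarith
  obtain ⟨K, hKdef⟩ : ∃ x : ℝ, x = K₀ ^ p * 2 ^ p := ⟨_, rfl⟩
  have hK0 : 0 < K := by
    rw [hKdef]
    have h1 := Real.rpow_pos_of_pos hK₀0 p
    have h2 := Real.rpow_pos_of_pos (by norm_num : (0:ℝ) < 2) p
    positivity
  -- measurability of Y
  have hmY : ∀ n, Measurable (Y n) := by
    intro n
    induction n with
    | zero => exact hTAR.meas_Y0
    | succ n ih =>
      have hfn : Y (n + 1) = fun ω =>
          (if r < Y n ω then α * Y n ω else β * Y n ω) + ε (n + 1) ω :=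
        funext fun ω => hTAR.recursion n ω
      rw [hfn]
      exact (Measurable.ite (measurableSet_lt measurable_const ih)
        (ih.const_mul α) (ih.const_mul β)).add (hTAR.meas_eps _)
  -- the truncated process
  obtain ⟨Z, hZeq⟩ : ∃ Z : ℕ → Ω → ℝ,
      Z = fun n ω => if Y n ω ≤ r then |Y n ω| else 0 := ⟨_, rfl⟩
  have hZif : ∀ n ω, Z n ω = if Y n ω ≤ r then |Y n ω| else 0 := by
    intro n ω; rw [hZeq]
  have hZnonneg : ∀ n ω, 0 ≤ Z n ω := by
    intro n ω; rw [hZif]; split <;> simp [abs_nonneg]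
  have hZle : ∀ n ω, Z n ω ≤ |Y n ω| := by
    intro n ω; rw [hZif]; split <;> simp [abs_nonneg]
  have hmZ : ∀ n, Measurable (Z n) := by
    intro n
    rw [hZeq]
    exact Measurable.ite (measurableSet_le (hmY n) measurable_const)
      (hmY n).abs measurable_const
  -- pointwise recursion for Z
  have hZrec : ∀ n ω, Z (n + 1) ω ≤ βp * Z n ω + c + |ε (n + 1) ω| := by
    intro n ω
    have hZn0 : 0 ≤ Z n ω := hZnonneg n ω
    have hεn : 0 ≤ |ε (n + 1) ω| := abs_nonneg _
    have hβZ : 0 ≤ βp * Z n ω := mul_nonneg hβp0 hZn0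
    by_cases h1 : Y (n + 1) ω ≤ r
    · have hrec := hTAR.recursion n ω
      rw [hα, one_mul] at hrec
      have hZs : Z (n + 1) ω = |Y (n + 1) ω| := by rw [hZif, if_pos h1]
      rw [hZs]
      by_cases h2 : r < Y n ω
      · rw [if_pos h2] at hrec
        have key : |Y (n + 1) ω| ≤ |r| + |ε (n + 1) ω| := by
          rw [abs_le]
          constructor
          · have h3 : -( |ε (n + 1) ω| ) ≤ ε (n + 1) ω := neg_abs_le _
            have h4 : -|r| ≤ r := neg_abs_le _
            linarith
          · have h5 : r ≤ |r| := le_abs_self _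
            linarith
        linarith
      · rw [if_neg h2] at hrec
        push_neg at h2
        have hZnval : Z n ω = |Y n ω| := by rw [hZif, if_pos h2]
        by_cases hb : 0 ≤ β
        · have hβpval : βp = β := hβpdef ▸ max_eq_left hb
          have hkey : |Y (n + 1) ω| ≤ β * |Y n ω| + |ε (n + 1) ω| := by
            calc |Y (n + 1) ω| = |β * Y n ω + ε (n + 1) ω| := by rw [hrec]
              _ ≤ |β * Y n ω| + |ε (n + 1) ω| := abs_add_le _ _
              _ = β * |Y n ω| + |ε (n + 1) ω| := by rw [abs_mul, abs_of_nonneg hb]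
          rw [hβpval, hZnval]
          linarith
        · push_neg at hb
          have hβpval : βp = 0 := hβpdef ▸ max_eq_right hb.le
          rw [hβpval, zero_mul]
          by_cases hy : Y n ω ≤ 0
          · have h3 : 0 ≤ β * Y n ω := by nlinarith
            have h4 : ε (n + 1) ω ≤ Y (n + 1) ω := by linarith [hrec.ge]
            rw [abs_le]
            constructor
            · have := neg_abs_le (ε (n + 1) ω)
              linarith
            · have h5 : r ≤ |r| := le_abs_self _
              linarith
          · push_neg at hy
            have h6 : |Y n ω| ≤ |r| := by
              rw [abs_of_pos hy]
              calc Y n ω ≤ r := h2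
                _ ≤ |r| := le_abs_self _
            have h7 : |Y (n + 1) ω| ≤ |β| * |Y n ω| + |ε (n + 1) ω| := by
              calc |Y (n + 1) ω| = |β * Y n ω + ε (n + 1) ω| := by rw [hrec]
                _ ≤ |β * Y n ω| + |ε (n + 1) ω| := abs_add_le _ _
                _ = |β| * |Y n ω| + |ε (n + 1) ω| := by rw [abs_mul]
            have h8 : |β| * |Y n ω| ≤ |β| * |r| :=
              mul_le_mul_of_nonneg_left h6 (abs_nonneg _)
            have h9 : c = |r| + |β| * |r| := by rw [hcdef]; ring
            linarith
    · have hZs : Z (n + 1) ω = 0 := by rw [hZif, if_neg h1]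
      rw [hZs]
      linarith
  -- power inequality
  have hpow : ∀ x y : ℝ, 0 ≤ x → 0 ≤ y →
      (βp * x + c + y) ^ p ≤ q * x ^ p + K * (c ^ p + y ^ p) := by
    intro x y hx hy
    have hs : 0 ≤ c + y := add_nonneg hc0 hy
    have hlhs : 0 ≤ βp * x + c + y := by
      have := mul_nonneg hβp0 hx; linarith
    have hqx : 0 ≤ q * x ^ p := mul_nonneg hq0.le (Real.rpow_nonneg hx p)
    have hKcy : 0 ≤ K * (c ^ p + y ^ p) :=
      mul_nonneg hK0.le (add_nonneg (Real.rpow_nonneg hc0 p) (Real.rpow_nonneg hy p))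
    by_cases hcase : c + y ≤ (θ - βp) * x
    · have h1 : βp * x + c + y ≤ θ * x := by nlinarith
      have h2 : (βp * x + c + y) ^ p ≤ (θ * x) ^ p :=
        Real.rpow_le_rpow hlhs h1 hp.le
      rw [Real.mul_rpow hθ0.le hx, ← hqdef] at h2
      linarith
    · push_neg at hcase
      have hxle : x ≤ (c + y) / (θ - βp) := by
        rw [le_div_iff₀ hθβ']
        nlinarith
      have h1 : βp * x + c + y ≤ K₀ * (c + y) := by
        have h1a : βp * x ≤ βp * ((c + y) / (θ - βp)) :=
          mul_le_mul_of_nonneg_left hxle hβp0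
        have h1b : K₀ * (c + y) = βp * ((c + y) / (θ - βp)) + (c + y) := by
          rw [hK₀def]; field_simp
        linarith
      have h2 : (βp * x + c + y) ^ p ≤ (K₀ * (c + y)) ^ p :=
        Real.rpow_le_rpow hlhs h1 hp.le
      rw [Real.mul_rpow hK₀0.le hs] at h2
      have h3 : (c + y) ^ p ≤ 2 ^ p * (c ^ p + y ^ p) := by
        have hm : c + y ≤ 2 * max c y := by
          rcases max_cases c y with ⟨h, h'⟩ | ⟨h, h'⟩ <;> linarith
        have hmx : 0 ≤ max c y := le_max_of_le_left hc0
        have h3a : (c + y) ^ p ≤ (2 * max c y) ^ p :=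
          Real.rpow_le_rpow hs hm hp.le
        rw [Real.mul_rpow (by norm_num) hmx] at h3a
        have h3b : (max c y) ^ p ≤ c ^ p + y ^ p := by
          rcases max_cases c y with ⟨h, _⟩ | ⟨h, _⟩ <;> rw [h]
          · linarith [Real.rpow_nonneg hy p]
          · linarith [Real.rpow_nonneg hc0 p]
        have h2p : (0:ℝ) < 2 ^ p := Real.rpow_pos_of_pos (by norm_num) p
        have := mul_le_mul_of_nonneg_left h3b h2p.le
        linarith
      have hK₀p : (0:ℝ) ≤ K₀ ^ p := Real.rpow_nonneg hK₀0.le p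
      have h4 : K₀ ^ p * (c + y) ^ p ≤ K₀ ^ p * (2 ^ p * (c ^ p + y ^ p)) :=
        mul_le_mul_of_nonneg_left h3 hK₀p
      have h5 : K₀ ^ p * (2 ^ p * (c ^ p + y ^ p)) = K * (c ^ p + y ^ p) := by
        rw [hKdef]; ring
      linarith
  -- pointwise p-th power recursion
  have hZp : ∀ n ω, Z (n + 1) ω ^ p ≤
      q * Z n ω ^ p + K * (c ^ p + |ε (n + 1) ω| ^ p) := by
    intro n ω
    calc Z (n + 1) ω ^ p ≤ (βp * Z n ω + c + |ε (n + 1) ω|) ^ p :=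
          Real.rpow_le_rpow (hZnonneg _ _) (hZrec n ω) hp.le
      _ ≤ _ := hpow _ _ (hZnonneg _ _) (abs_nonneg _)
  -- integrability of |ε k|^p
  have hεmeas : Measurable fun x : ℝ => |x| ^ p := by fun_prop
  have hεint : ∀ k, Integrable (fun ω => |ε k ω| ^ p) μ := by
    intro k
    have hid : IdentDistrib (fun ω => |ε k ω| ^ p) (fun ω => |ε 1 ω| ^ p) μ μ :=
      (hTAR.ident k 1).comp hεmeas
    exact hid.integrable_iff.mpr hεp
  have hεintegral : ∀ k, ∫ ω, |ε k ω| ^ p ∂μ = ∫ ω, |ε 1 ω| ^ p ∂μ := by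
    intro k
    exact ((hTAR.ident k 1).comp hεmeas).integral_eq
  -- dominating function and integrability of Z n ^ p
  have hZpb : ∀ n ω, Z n ω ^ p ≤
      |Y 0 ω| ^ p + ∑ k ∈ Finset.range n, K * (c ^ p + |ε (k + 1) ω| ^ p) := by
    intro n
    induction n with
    | zero =>
      intro ω
      simpa using Real.rpow_le_rpow (hZnonneg 0 ω) (hZle 0 ω) hp.le
    | succ n ih =>
      intro ω
      have h1 := hZp n ω
      have h2 : q * Z n ω ^ p ≤ Z n ω ^ p := by
        nlinarith [Real.rpow_nonneg (hZnonneg n ω) p, hq1.le]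
      rw [Finset.sum_range_succ]
      linarith [ih ω]
  have hrpowmeas : Measurable fun x : ℝ => x ^ p := by fun_prop
  have hZint : ∀ n, Integrable (fun ω => Z n ω ^ p) μ := by
    intro n
    have hdom : Integrable (fun ω =>
        |Y 0 ω| ^ p + ∑ k ∈ Finset.range n, K * (c ^ p + |ε (k + 1) ω| ^ p)) μ := by
      refine hY0p.add (integrable_finset_sum _ fun k _ => ?_)
      exact ((integrable_const (c ^ p)).add (hεint (k + 1))).const_mul K
    refine hdom.mono' ((hrpowmeas.comp (hmZ n)).aestronglyMeasurable) ?_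
    filter_upwards with ω
    rw [Real.norm_eq_abs, abs_of_nonneg (Real.rpow_nonneg (hZnonneg n ω) p)]
    exact hZpb n ω
  -- the constant
  obtain ⟨M, hMdef⟩ : ∃ x : ℝ, x = K / (1 - q) := ⟨_, rfl⟩
  have hM0 : 0 < M := hMdef ▸ div_pos hK0 (by linarith)
  have hMK : (1 - q) * M = K := by
    rw [hMdef, mul_comm]
    exact div_mul_cancel₀ K (ne_of_gt (by linarith : (0:ℝ) < 1 - q))
  have hcp : 0 ≤ c ^ p := Real.rpow_nonneg hc0 p
  refine ⟨1 + M * (1 + c ^ p), ?_, ?_⟩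
  · have : 0 ≤ M * (1 + c ^ p) := mul_nonneg hM0.le (by linarith)
    linarith
  intro n hn A hA
  -- rewrite LHS as an integral of Z n ^ p over A
  have hZind : (fun ω => Z n ω ^ p) =
      Set.indicator {ω | Y n ω ≤ r} (fun ω => |Y n ω| ^ p) := by
    funext ω
    by_cases h : Y n ω ≤ r
    · have hmem : ω ∈ {ω' | Y n ω' ≤ r} := h
      rw [Set.indicator_of_mem hmem, hZif, if_pos h]
    · have hmem : ω ∉ {ω' | Y n ω' ≤ r} := h
      rw [Set.indicator_of_notMem hmem, hZif, if_neg h, Real.zero_rpow hp.ne']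
  have hLHS : ∫ ω in A ∩ {ω | Y n ω ≤ r}, |Y n ω| ^ p ∂μ =
      ∫ ω in A, Z n ω ^ p ∂μ := by
    rw [hZind, setIntegral_indicator (measurableSet_le (hmY n) measurable_const)]
  rw [hLHS]
  obtain ⟨S, hSdef⟩ : ∃ x : ℝ, x = ⨆ k : ℕ, ∫ ω in A, |ε (k + 1) ω| ^ p ∂μ := ⟨_, rfl⟩
  obtain ⟨P, hPdef⟩ : ∃ x : ℝ, x = (μ A).toReal := ⟨_, rfl⟩
  obtain ⟨I, hIdef⟩ : ∃ x : ℝ, x = ∫ ω in A, |Y 0 ω| ^ p ∂μ := ⟨_, rfl⟩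
  rw [← hSdef, ← hPdef, ← hIdef]
  have hεA0 : ∀ k : ℕ, 0 ≤ ∫ ω in A, |ε (k + 1) ω| ^ p ∂μ := fun k =>
    integral_nonneg fun ω => Real.rpow_nonneg (abs_nonneg _) p
  have hbdd : BddAbove (Set.range fun k : ℕ => ∫ ω in A, |ε (k + 1) ω| ^ p ∂μ) := by
    refine ⟨∫ ω, |ε 1 ω| ^ p ∂μ, ?_⟩
    rintro _ ⟨k, rfl⟩
    calc ∫ ω in A, |ε (k + 1) ω| ^ p ∂μ ≤ ∫ ω, |ε (k + 1) ω| ^ p ∂μ :=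
          setIntegral_le_integral (hεint (k + 1))
            (Filter.Eventually.of_forall fun ω => Real.rpow_nonneg (abs_nonneg _) p)
      _ = ∫ ω, |ε 1 ω| ^ p ∂μ := hεintegral (k + 1)
  have hSle : ∀ k : ℕ, ∫ ω in A, |ε (k + 1) ω| ^ p ∂μ ≤ S := fun k =>
    hSdef ▸ le_ciSup hbdd k
  have hS0 : 0 ≤ S := le_trans (hεA0 0) (hSle 0)
  have hP0 : 0 ≤ P := hPdef ▸ ENNReal.toReal_nonneg
  have hI0 : 0 ≤ I :=
    hIdef ▸ integral_nonneg fun ω => Real.rpow_nonneg (abs_nonneg _) p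
  obtain ⟨E, hEdef⟩ : ∃ x : ℝ, x = c ^ p * P + S := ⟨_, rfl⟩
  have hE0 : 0 ≤ E := by
    rw [hEdef]
    have := mul_nonneg hcp hP0
    linarith
  have ha0 : ∀ m : ℕ, 0 ≤ ∫ ω in A, Z m ω ^ p ∂μ := fun m =>
    integral_nonneg fun ω => Real.rpow_nonneg (hZnonneg m ω) p
  -- one-step recursion for the integrals
  have harec : ∀ m : ℕ, (∫ ω in A, Z (m + 1) ω ^ p ∂μ) ≤
      q * (∫ ω in A, Z m ω ^ p ∂μ) + K * E := by
    intro m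
    have hint1 : Integrable (fun ω => Z (m + 1) ω ^ p) (μ.restrict A) :=
      (hZint (m + 1)).restrict
    have hint2 : Integrable
        (fun ω => q * Z m ω ^ p + K * (c ^ p + |ε (m + 1) ω| ^ p)) (μ.restrict A) :=
      (((hZint m).const_mul q).add
        (((integrable_const (c ^ p)).add (hεint (m + 1))).const_mul K)).restrict
    have h1 : (∫ ω in A, Z (m + 1) ω ^ p ∂μ) ≤
        ∫ ω in A, (q * Z m ω ^ p + K * (c ^ p + |ε (m + 1) ω| ^ p)) ∂μ :=
      integral_mono hint1 hint2 fun ω => hZp m ω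
    have h2 : ∫ ω in A, (q * Z m ω ^ p + K * (c ^ p + |ε (m + 1) ω| ^ p)) ∂μ =
        q * (∫ ω in A, Z m ω ^ p ∂μ) +
          K * (c ^ p * P + ∫ ω in A, |ε (m + 1) ω| ^ p ∂μ) := by
      have hg1 : Integrable (fun ω => q * Z m ω ^ p) (μ.restrict A) :=
        ((hZint m).const_mul q).restrict
      have hg3a : Integrable (fun _ : Ω => c ^ p) (μ.restrict A) := integrable_const _
      have hg3b : Integrable (fun ω => |ε (m + 1) ω| ^ p) (μ.restrict A) :=
        (hεint (m + 1)).restrict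
      have hg2 : Integrable (fun ω => K * (c ^ p + |ε (m + 1) ω| ^ p)) (μ.restrict A) := by
        exact (hg3a.add hg3b).const_mul K
      rw [integral_add hg1 hg2, integral_const_mul, integral_const_mul,
        integral_add hg3a hg3b, setIntegral_const, smul_eq_mul, measureReal_def, hPdef]
      ring
    have h3 : K * (c ^ p * P + ∫ ω in A, |ε (m + 1) ω| ^ p ∂μ) ≤ K * E := by
      rw [hEdef]
      exact mul_le_mul_of_nonneg_left (by linarith [hSle m]) hK0.le
    rw [h2] at h1
    linarith
  -- uniform-in-n bound by induction
  have hbound : ∀ m : ℕ, (∫ ω in A, Z m ω ^ p ∂μ) ≤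
      (∫ ω in A, Z 0 ω ^ p ∂μ) + M * E := by
    intro m
    induction m with
    | zero =>
      have := mul_nonneg hM0.le hE0
      linarith
    | succ m ih =>
      have h1 := harec m
      have h2 : q * (∫ ω in A, Z m ω ^ p ∂μ) ≤
          q * ((∫ ω in A, Z 0 ω ^ p ∂μ) + M * E) :=
        mul_le_mul_of_nonneg_left ih hq0.le
      have hKE : (1 - q) * (M * E) = K * E := by rw [← hMK]; ring
      have h3 : q * (∫ ω in A, Z 0 ω ^ p ∂μ) ≤ (∫ ω in A, Z 0 ω ^ p ∂μ) := by
        nlinarith [ha0 0, hq1.le]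
      nlinarith
  -- conclude
  have ha0le : (∫ ω in A, Z 0 ω ^ p ∂μ) ≤ I := by
    rw [hIdef]
    refine integral_mono ((hZint 0).restrict) (hY0p.restrict) fun ω => ?_
    exact Real.rpow_le_rpow (hZnonneg 0 ω) (hZle 0 ω) hp.le
  have hfin := hbound n
  have hME : M * E = M * c ^ p * P + M * S := by rw [hEdef]; ring
  nlinarith [mul_nonneg hM0.le hI0, mul_nonneg hM0.le hP0,
    mul_nonneg (mul_nonneg hM0.le hcp) hS0, mul_nonneg (mul_nonneg hM0.le hcp) hI0,
    mul_nonneg hM0.le hS0]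

end
end

section
/- Assume the TAR(1) model with zero intercepts and that either (H1) α > 1, β ≤ 1, r = 0 and E Y₀² < ∞, or (H2) α > 1, β ≤ 1, r ≠ 0, E Y₀² < ∞ and P(ε₁ ≤ x) < 1 for every real x. Then there is a constant C such that E|Y_n| ≤ C αⁿ for all n ≥ 1, i.e., E|Y_n| = O(αⁿ). -/
open MeasureTheory ProbabilityTheory Filter
open scoped Topology NNReal ENNReal

noncomputable section

/-- Pointwise bound on the negative part for the TAR(1) recursion. -/
private lemma tar_aux_neg {α β r : ℝ} (hα : 1 < α) (hβ : β ≤ 1) (y e : ℝ) :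
    max (-((if r < y then α * y else β * y) + e)) 0
      ≤ max (-y) 0 + ((α + |β|) * |r| + |e|) := by
  have hα0 : (0 : ℝ) < α := by linarith
  have h1 : (0 : ℝ) ≤ max (-y) 0 := le_max_right _ _
  have h2 : (0 : ℝ) ≤ |β| * |r| := mul_nonneg (abs_nonneg _) (abs_nonneg _)
  have h3 : (α + |β|) * |r| = α * |r| + |β| * |r| := by ring
  have h4 : -e ≤ |e| := neg_le_abs e
  have h5 : (0 : ℝ) ≤ α * |r| := mul_nonneg hα0.le (abs_nonneg _)
  refine max_le ?_ (by positivity)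
  split_ifs with hy
  · -- α-branch: y > r
    have h6 : α * r ≤ α * y := mul_le_mul_of_nonneg_left hy.le hα0.le
    have h7 : α * (-r) ≤ α * |r| := mul_le_mul_of_nonneg_left (neg_le_abs r) hα0.le
    nlinarith
  · -- β-branch: y ≤ r
    push_neg at hy
    rcases le_total β 0 with hb | hb
    · have h6 : β * r ≤ β * y := mul_le_mul_of_nonpos_left hy hb
      have h7 : -(β * r) = |β| * r := by rw [abs_of_nonpos hb]; ring
      have h8 : |β| * r ≤ |β| * |r| := mul_le_mul_of_nonneg_left (le_abs_self r) (abs_nonneg _)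
      nlinarith
    · have h6 : -y ≤ max (-y) 0 := le_max_left _ _
      have h7 : β * (-y) ≤ β * max (-y) 0 := mul_le_mul_of_nonneg_left h6 hb
      have h8 : β * max (-y) 0 ≤ 1 * max (-y) 0 := mul_le_mul_of_nonneg_right hβ h1
      nlinarith

/-- Pointwise bound on the positive part for the TAR(1) recursion. -/
private lemma tar_aux_pos {α β r : ℝ} (hα : 1 < α) (hβ : β ≤ 1) (y e : ℝ) :
    max ((if r < y then α * y else β * y) + e) 0
      ≤ α * max y 0 + |β| * max (-y) 0 + |e| := by
  have hα0 : (0 : ℝ) < α := by linarith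
  have h1 : (0 : ℝ) ≤ max y 0 := le_max_right _ _
  have h1' : (0 : ℝ) ≤ max (-y) 0 := le_max_right _ _
  have h4 : e ≤ |e| := le_abs_self e
  refine max_le ?_ (by positivity)
  split_ifs with hy
  · have h6 : y ≤ max y 0 := le_max_left _ _
    have h7 : α * y ≤ α * max y 0 := mul_le_mul_of_nonneg_left h6 hα0.le
    nlinarith [mul_nonneg (abs_nonneg β) h1']
  · rcases le_total β 0 with hb | hb
    · have h6 : -y ≤ max (-y) 0 := le_max_left _ _
      have h7 : β * y = |β| * (-y) := by rw [abs_of_nonpos hb]; ring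
      have h8 : |β| * (-y) ≤ |β| * max (-y) 0 :=
        mul_le_mul_of_nonneg_left h6 (abs_nonneg _)
      nlinarith [mul_nonneg hα0.le h1]
    · have h6 : y ≤ max y 0 := le_max_left _ _
      have h7 : β * y ≤ β * max y 0 := mul_le_mul_of_nonneg_left h6 hb
      have h8 : β * max y 0 ≤ 1 * max y 0 := mul_le_mul_of_nonneg_right hβ h1
      have h9 : 1 * max y 0 ≤ α * max y 0 := mul_le_mul_of_nonneg_right hα.le h1
      nlinarith [mul_nonneg (abs_nonneg β) h1']

private lemma abs_eq_max_add_max (x : ℝ) : |x| = max x 0 + max (-x) 0 := by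
  rcases le_total x 0 with h | h
  · rw [abs_of_nonpos h, max_eq_right h, max_eq_left (by linarith)]; ring
  · rw [abs_of_nonneg h, max_eq_left h, max_eq_right (by linarith)]; ring

/-- Part of Theorem 4.1 / Lemma 4.1(i): under (H1) or (H2), `E|Y_n| = O(αⁿ)`. -/
theorem tar1_explosive_moment_growth
    {Ω : Type*} [MeasurableSpace Ω] {μ : Measure Ω} {α β r σ : ℝ} {ε Y : ℕ → Ω → ℝ}
    (hTAR : IsTAR1 μ α β r σ ε Y) (hY0 : MemLp (Y 0) 2 μ)
    (hα : 1 < α) (hβ : β ≤ 1)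
    (hcase : r = 0 ∨ (r ≠ 0 ∧ ∀ x : ℝ, μ {ω | ε 1 ω ≤ x} < 1)) :
    ∃ C : ℝ, 0 < C ∧ ∀ n : ℕ, 1 ≤ n → ∫ ω, |Y n ω| ∂μ ≤ C * α ^ n := by
  haveI : IsProbabilityMeasure μ := hTAR.isProb
  have hα0 : (0 : ℝ) < α := by linarith
  have hα1 : (0 : ℝ) < α - 1 := by linarith
  -- measurability of Y n
  have measY : ∀ n, Measurable (Y n) := by
    intro n
    induction n with
    | zero => exact hTAR.meas_Y0
    | succ n ih =>
      have hrw : Y (n + 1) = fun ω =>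
          (if r < Y n ω then α * Y n ω else β * Y n ω) + ε (n + 1) ω :=
        funext fun ω => hTAR.recursion n ω
      rw [hrw]
      exact (Measurable.ite (measurableSet_lt measurable_const ih)
        (ih.const_mul α) (ih.const_mul β)).add (hTAR.meas_eps (n + 1))
  -- integrability of the innovations
  have intEps : ∀ t, Integrable (ε t) μ := fun t =>
    (hTAR.ident t 1).integrable_iff.mpr hTAR.integrable
  have intAbsEps : ∀ t, Integrable (fun ω => |ε t ω|) μ := fun t => (intEps t).abs
  set e : ℝ := ∫ ω, |ε 1 ω| ∂μ with he
  have eEq : ∀ t, ∫ ω, |ε t ω| ∂μ = e := fun t =>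
    ((hTAR.ident t 1).comp measurable_abs).integral_eq
  have e_nonneg : 0 ≤ e := integral_nonneg fun ω => abs_nonneg _
  -- integrability of Y n
  have intY : ∀ n, Integrable (Y n) μ := by
    intro n
    induction n with
    | zero => exact hY0.integrable one_le_two
    | succ n ih =>
      refine Integrable.mono' (((ih.abs.const_mul (max α |β|)).add
        (intAbsEps (n + 1)))) (measY (n + 1)).aestronglyMeasurable ?_
      refine Filter.Eventually.of_forall fun ω => ?_
      rw [Real.norm_eq_abs, hTAR.recursion n ω]
      have h1 : |if r < Y n ω then α * Y n ω else β * Y n ω| ≤ max α |β| * |Y n ω| := by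
        split_ifs with hy
        · rw [abs_mul, abs_of_pos hα0]
          exact mul_le_mul_of_nonneg_right (le_max_left _ _) (abs_nonneg _)
        · rw [abs_mul]
          exact mul_le_mul_of_nonneg_right (le_max_right _ _) (abs_nonneg _)
      calc |(if r < Y n ω then α * Y n ω else β * Y n ω) + ε (n + 1) ω|
          ≤ |if r < Y n ω then α * Y n ω else β * Y n ω| + |ε (n + 1) ω| := abs_add_le _ _
        _ ≤ max α |β| * |Y n ω| + |ε (n + 1) ω| := by linarith
  have intPos : ∀ n, Integrable (fun ω => max (Y n ω) 0) μ := fun n => (intY n).pos_part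
  have intNeg : ∀ n, Integrable (fun ω => max (-(Y n ω)) 0) μ := by
    intro n
    have := (intY n).neg_part
    simpa [max_def] using this
  -- the two expectations
  set a : ℕ → ℝ := fun n => ∫ ω, max (-(Y n ω)) 0 ∂μ with ha
  set b : ℕ → ℝ := fun n => ∫ ω, max (Y n ω) 0 ∂μ with hb
  have a_nonneg : ∀ n, 0 ≤ a n := fun n => integral_nonneg fun ω => le_max_right _ _
  have b_nonneg : ∀ n, 0 ≤ b n := fun n => integral_nonneg fun ω => le_max_right _ _
  set c : ℝ := (α + |β|) * |r| with hc
  have c_nonneg : 0 ≤ c := by positivity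
  -- recursion for a
  have a_step : ∀ t, a (t + 1) ≤ a t + (c + e) := by
    intro t
    have hint1 : Integrable (fun ω => c + |ε (t + 1) ω|) μ :=
      (integrable_const c).add (intAbsEps (t + 1))
    have hmono : a (t + 1) ≤ ∫ ω, (max (-(Y t ω)) 0 + (c + |ε (t + 1) ω|)) ∂μ := by
      refine integral_mono (intNeg (t + 1)) ((intNeg t).add hint1) fun ω => ?_
      simp only
      rw [hTAR.recursion t ω]
      exact tar_aux_neg hα hβ (Y t ω) (ε (t + 1) ω)
    rw [integral_add (intNeg t) hint1,
      integral_add (integrable_const c) (intAbsEps (t + 1)), integral_const, eEq] at hmono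
    simpa using hmono
  -- recursion for b
  have b_step : ∀ t, b (t + 1) ≤ α * b t + |β| * a t + e := by
    intro t
    have hint1 : Integrable (fun ω => α * max (Y t ω) 0) μ := (intPos t).const_mul α
    have hint2 : Integrable (fun ω => |β| * max (-(Y t ω)) 0) μ := (intNeg t).const_mul |β|
    have hint12 : Integrable (fun ω => α * max (Y t ω) 0 + |β| * max (-(Y t ω)) 0) μ :=
      hint1.add hint2
    have hmono : b (t + 1)
        ≤ ∫ ω, (α * max (Y t ω) 0 + |β| * max (-(Y t ω)) 0 + |ε (t + 1) ω|) ∂μ := by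
      refine integral_mono (intPos (t + 1)) (hint12.add
          (intAbsEps (t + 1))) fun ω => ?_
      simp only
      rw [hTAR.recursion t ω]
      exact tar_aux_pos hα hβ (Y t ω) (ε (t + 1) ω)
    rw [integral_add hint12 (intAbsEps (t + 1)),
      integral_add hint1 hint2,
      integral_const_mul, integral_const_mul, eEq] at hmono
    exact hmono
  -- Lyapunov function
  set lam : ℝ := |β| / (α - 1) + 1 with hlam
  have lam_ge1 : 1 ≤ lam := by
    have : 0 ≤ |β| / (α - 1) := div_nonneg (abs_nonneg _) hα1.le
    rw [hlam]; linarith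
  have lam_nonneg : 0 ≤ lam := by linarith
  have key1 : |β| + lam ≤ α * lam := by
    have hfs : (α - 1) * (|β| / (α - 1)) = |β| := by field_simp
    rw [hlam]; nlinarith
  set kap : ℝ := (e + lam * (c + e)) / (α - 1) with hkap
  have kap_nonneg : 0 ≤ kap := by
    rw [hkap]
    apply div_nonneg _ hα1.le
    have : 0 ≤ lam * (c + e) := mul_nonneg lam_nonneg (by linarith)
    linarith
  have key2 : e + lam * (c + e) + kap ≤ α * kap := by
    have hfs : (α - 1) * kap = e + lam * (c + e) := by rw [hkap]; field_simp
    nlinarith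
  set v : ℕ → ℝ := fun n => b n + lam * a n + kap with hv
  have v_step : ∀ t, v (t + 1) ≤ α * v t := by
    intro t
    have h1 := a_step t
    have h2 := b_step t
    have h3 : lam * a (t + 1) ≤ lam * (a t + (c + e)) :=
      mul_le_mul_of_nonneg_left h1 lam_nonneg
    have h4 : (|β| + lam) * a t ≤ (α * lam) * a t :=
      mul_le_mul_of_nonneg_right key1 (a_nonneg t)
    simp only [hv]
    nlinarith
  have v_nonneg : ∀ n, 0 ≤ v n := by
    intro n
    have : 0 ≤ lam * a n := mul_nonneg lam_nonneg (a_nonneg n)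
    simp only [hv]
    linarith [b_nonneg n]
  have v_growth : ∀ n, v n ≤ α ^ n * v 0 := by
    intro n
    induction n with
    | zero => simp
    | succ n ih =>
      calc v (n + 1) ≤ α * v n := v_step n
        _ ≤ α * (α ^ n * v 0) := mul_le_mul_of_nonneg_left ih hα0.le
        _ = α ^ (n + 1) * v 0 := by ring
  refine ⟨v 0 + 1, by linarith [v_nonneg 0], fun n _ => ?_⟩
  have habs : ∫ ω, |Y n ω| ∂μ = b n + a n := by
    rw [hb, ha, ← integral_add (intPos n) (intNeg n)]
    congr 1
    funext ω
    exact abs_eq_max_add_max (Y n ω)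
  have h5 : a n ≤ lam * a n := by nlinarith [a_nonneg n]
  have h6 : (0:ℝ) < α ^ n := pow_pos hα0 n
  calc ∫ ω, |Y n ω| ∂μ = b n + a n := habs
    _ ≤ v n := by simp only [hv]; linarith
    _ ≤ α ^ n * v 0 := v_growth n
    _ ≤ (v 0 + 1) * α ^ n := by nlinarith
end
end

section
/- Assume the TAR(1) model with zero intercepts and that either (H1) α > 1, β ≤ 1, r = 0 and E Y₀² < ∞, or (H2) α > 1, β ≤ 1, r ≠ 0, E Y₀² < ∞ and P(ε₁ ≤ x) < 1 for every real x. If limsup_{n→∞} Y_n = ∞ almost surely, then Y_n/n → ∞ almost surely. -/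
open MeasureTheory ProbabilityTheory Filter
open scoped Topology NNReal ENNReal

noncomputable section

lemma tar1_aux_pow_div (a : ℝ) (ha : 1 < a) :
    Tendsto (fun n : ℕ => a ^ n / n) atTop atTop := by
  have ha0 : (0:ℝ) < a := lt_trans one_pos ha
  have hlog : 0 < Real.log a := Real.log_pos ha
  have h1 : Tendsto (fun x : ℝ => Real.exp x / x) atTop atTop := by
    simpa using Real.tendsto_exp_div_pow_atTop 1
  have h2 : Tendsto (fun n : ℕ => (n : ℝ) * Real.log a) atTop atTop :=
    tendsto_natCast_atTop_atTop.atTop_mul_const hlog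
  have h3 := (h1.comp h2).atTop_mul_const hlog
  refine h3.congr' ?_
  filter_upwards [eventually_gt_atTop 0] with n hn
  have hn' : (0:ℝ) < n := by exact_mod_cast hn
  have hexp : Real.exp ((n:ℝ) * Real.log a) = a ^ n := by
    rw [Real.exp_nat_mul, Real.exp_log ha0]
  simp only [Function.comp_apply, hexp]
  field_simp

lemma tar1_aux_escape {a b r : ℝ} (ha : 1 < a) {u e : ℕ → ℝ}
    (hrec : ∀ t, u (t + 1) = (if r < u t then a * u t else b * u t) + e (t + 1))
    {n : ℕ} {K : ℝ}
    (hK : ∀ m : ℕ, ∑ k ∈ Finset.range m, (a⁻¹) ^ (k + 1) * |e (n + 1 + k)| ≤ K)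
    (hY : max r 0 + K < u n) :
    Tendsto (fun t : ℕ => u t / t) atTop atTop := by
  have ha0 : (0:ℝ) < a := lt_trans one_pos ha
  set c : ℝ := u n - K with hc
  have hc0 : max r 0 < c := by simp only [hc]; linarith
  have hcpos : 0 < c := lt_of_le_of_lt (le_max_right r 0) hc0
  have hrc : r < c := lt_of_le_of_lt (le_max_left r 0) hc0
  have main : ∀ m : ℕ,
      a ^ m * (u n - ∑ k ∈ Finset.range m, (a⁻¹) ^ (k + 1) * |e (n + 1 + k)|) ≤ u (n + m) := by
    intro m
    induction m with
    | zero => simp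
    | succ m ih =>
      have hsle := hK m
      set Sm : ℝ := ∑ k ∈ Finset.range m, (a⁻¹) ^ (k + 1) * |e (n + 1 + k)| with hSm
      have h1 : c ≤ u n - Sm := by simp only [hc]; linarith
      have hpow1 : (1:ℝ) ≤ a ^ m := one_le_pow₀ ha.le
      have h2 : c ≤ a ^ m * (u n - Sm) :=
        le_trans h1 (le_mul_of_one_le_left (by linarith) hpow1)
      have hrm : r < u (n + m) := lt_of_lt_of_le hrc (le_trans h2 ih)
      have hrec' := hrec (n + m)
      rw [if_pos hrm] at hrec'
      have hkey : a ^ (m+1) * (a⁻¹) ^ (m+1) = 1 := by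
        rw [← mul_pow, mul_inv_cancel₀ (ne_of_gt ha0), one_pow]
      have hne : e (n + m + 1) = e (n + 1 + m) := by
        congr 1; omega
      have habs : -|e (n + 1 + m)| ≤ e (n + 1 + m) := neg_abs_le _
      have hstep : a * (a ^ m * (u n - Sm)) ≤ a * u (n + m) :=
        mul_le_mul_of_nonneg_left ih ha0.le
      have hsum : ∑ k ∈ Finset.range (m+1), (a⁻¹) ^ (k + 1) * |e (n + 1 + k)|
          = Sm + (a⁻¹) ^ (m + 1) * |e (n + 1 + m)| := by
        rw [Finset.sum_range_succ]
      calc a ^ (m+1) * (u n - ∑ k ∈ Finset.range (m+1), (a⁻¹) ^ (k + 1) * |e (n + 1 + k)|)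
          = a * (a ^ m * (u n - Sm)) - (a ^ (m+1) * (a⁻¹) ^ (m+1)) * |e (n + 1 + m)| := by
            rw [hsum]; ring
        _ = a * (a ^ m * (u n - Sm)) - |e (n + 1 + m)| := by rw [hkey, one_mul]
        _ ≤ a * u (n + m) + e (n + 1 + m) := by linarith
        _ = u (n + (m + 1)) := by
            have : n + (m + 1) = (n + m) + 1 := by omega
            rw [this, hrec', hne]
  have hge : ∀ m : ℕ, a ^ m * c ≤ u (n + m) := by
    intro m
    refine le_trans ?_ (main m)
    have := hK m
    have hpow : (0:ℝ) ≤ a ^ m := (pow_pos ha0 m).le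
    have : c ≤ u n - ∑ k ∈ Finset.range m, (a⁻¹) ^ (k + 1) * |e (n + 1 + k)| := by
      simp only [hc]; linarith
    exact mul_le_mul_of_nonneg_left this hpow
  have hbase : Tendsto (fun t : ℕ => (c / a ^ n) * (a ^ t / t)) atTop atTop :=
    (tar1_aux_pow_div a ha).const_mul_atTop (div_pos hcpos (pow_pos ha0 n))
  refine tendsto_atTop_mono' atTop ?_ hbase
  filter_upwards [eventually_ge_atTop (n+1)] with t ht
  have htn : n ≤ t := by omega
  have ht0 : (0:ℝ) < t := by
    have : 0 < t := by omega
    exact_mod_cast this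
  have h5 : a ^ (t - n) * c ≤ u t := by
    have := hge (t - n)
    rwa [Nat.add_sub_cancel' htn] at this
  have hpowsplit : a ^ t = a ^ (t - n) * a ^ n := by
    rw [← pow_add]; congr 1; omega
  have heq : (c / a ^ n) * (a ^ t / t) = (a ^ (t - n) * c) / t := by
    rw [hpowsplit]
    field_simp
  rw [heq]
  gcongr

/-- Lemma 4.1(ii): under (H1) or (H2), if `limsup Y_n = ∞` a.s. then `Y_n / n → ∞` a.s. -/
theorem tar1_explosive_superlinear
    {Ω : Type*} [MeasurableSpace Ω] {μ : Measure Ω} {α β r σ : ℝ} {ε Y : ℕ → Ω → ℝ}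
    (hTAR : IsTAR1 μ α β r σ ε Y) (hY0 : MemLp (Y 0) 2 μ)
    (hα : 1 < α) (hβ : β ≤ 1)
    (hcase : r = 0 ∨ (r ≠ 0 ∧ ∀ x : ℝ, μ {ω | ε 1 ω ≤ x} < 1))
    (hlimsup : ∀ᵐ ω ∂μ, ∀ M : ℝ, ∃ᶠ n in atTop, M < Y n ω) :
    ∀ᵐ ω ∂μ, Tendsto (fun n => Y n ω / n) atTop atTop := by
  classical
  haveI : IsProbabilityMeasure μ := hTAR.isProb
  have hα0 : (0:ℝ) < α := lt_trans one_pos hα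
  -- combined family
  set f : ℕ → Ω → ℝ := fun i => if i = 0 then Y 0 else ε i with hf
  have hmeasf : ∀ i, Measurable (f i) := by
    intro i
    by_cases h : i = 0 <;> simp only [hf, h, if_pos, if_neg, if_true, if_false]
    · simpa using hTAR.meas_Y0
    · simpa [h] using hTAR.meas_eps i
  -- iIndep of the combined family
  set E : Ω → ℕ → ℝ := fun ω t => ε t ω with hE
  have hcomap_le : ∀ i, MeasurableSpace.comap (ε i) inferInstance ≤
      MeasurableSpace.comap E MeasurableSpace.pi := by
    intro i
    have h1 : ε i = (fun p : ℕ → ℝ => p i) ∘ E := rfl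
    calc MeasurableSpace.comap (ε i) inferInstance
        = MeasurableSpace.comap E (MeasurableSpace.comap (fun p : ℕ → ℝ => p i) inferInstance) := by
          rw [h1, ← MeasurableSpace.comap_comp]
      _ ≤ MeasurableSpace.comap E MeasurableSpace.pi :=
          MeasurableSpace.comap_mono (measurable_iff_comap_le.1 (measurable_pi_apply i))
  have hεind : iIndep (fun i => MeasurableSpace.comap (ε i) inferInstance) μ :=
    (iIndepFun_iff_iIndep _ _ _).1 hTAR.indep
  have hεind' := (iIndep_iff _ μ).1 hεind
  have hYprod := indepFun_iff_measure_inter_preimage_eq_mul.1 hTAR.indep_Y0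
  have hfind : iIndep (fun i => MeasurableSpace.comap (f i) inferInstance) μ := by
    rw [iIndep_iff]
    intro s g hg
    by_cases h0 : 0 ∈ s
    · -- separate index 0
      have hg0 : MeasurableSet[MeasurableSpace.comap (Y 0) inferInstance] (g 0) := by
        have := hg 0 h0
        simpa only [hf, if_pos rfl] using this
      obtain ⟨S0, hS0m, hS0pre⟩ := hg0
      have hgε : ∀ i ∈ s.erase 0,
          MeasurableSet[MeasurableSpace.comap (ε i) inferInstance] (g i) := by
        intro i hi
        have hi0 : i ≠ 0 := Finset.ne_of_mem_erase hi
        have := hg i (Finset.mem_of_mem_erase hi)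
        rwa [show f i = ε i from if_neg hi0] at this
      have hInter : MeasurableSet[MeasurableSpace.comap E MeasurableSpace.pi]
          (⋂ i ∈ s.erase 0, g i) :=
        Finset.measurableSet_biInter _ fun i hi => hcomap_le i _ (hgε i hi)
      obtain ⟨T, hTm, hTpre⟩ := hInter
      have hsplit : (⋂ i ∈ s, g i) = g 0 ∩ ⋂ i ∈ s.erase 0, g i := by
        conv_lhs => rw [← Finset.insert_erase h0]
        rw [Finset.set_biInter_insert]
      have hmuB : μ (⋂ i ∈ s.erase 0, g i) = ∏ i ∈ s.erase 0, μ (g i) :=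
        hεind' (s.erase 0) hgε
      have hprod : ∏ i ∈ s, μ (g i) = μ (g 0) * ∏ i ∈ s.erase 0, μ (g i) := by
        conv_lhs => rw [← Finset.insert_erase h0]
        rw [Finset.prod_insert (Finset.notMem_erase 0 s)]
      rw [hsplit, hprod, ← hS0pre, ← hTpre, hYprod S0 T hS0m hTm, hS0pre, hTpre, hmuB]
    · -- no index 0
      refine hεind' s fun i hi => ?_
      have hi0 : i ≠ 0 := fun h => h0 (h ▸ hi)
      have := hg i hi
      rwa [show f i = ε i from if_neg hi0] at this
  -- sigma-algebras
  set F : ℕ → MeasurableSpace Ω :=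
    fun n => ⨆ i ∈ Set.Iic n, MeasurableSpace.comap (f i) inferInstance with hFdef
  set G : ℕ → MeasurableSpace Ω :=
    fun n => ⨆ i ∈ Set.Ioi n, MeasurableSpace.comap (f i) inferInstance with hGdef
  have hle_f : ∀ i, MeasurableSpace.comap (f i) inferInstance ≤ ‹MeasurableSpace Ω› :=
    fun i => (hmeasf i).comap_le
  have hFle : ∀ n, F n ≤ ‹MeasurableSpace Ω› := fun n => iSup₂_le fun i _ => hle_f i
  have hGle : ∀ n, G n ≤ ‹MeasurableSpace Ω› := fun n => iSup₂_le fun i _ => hle_f i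
  have hFmono : Monotone F := by
    intro a b hab
    exact biSup_mono fun i hi => le_trans hi hab
  have hindep_FG : ∀ n, Indep (F n) (G n) μ := fun n =>
    indep_iSup_of_disjoint hle_f hfind (Set.Iic_disjoint_Ioi le_rfl)
  set ℱ : Filtration ℕ ‹MeasurableSpace Ω› := ⟨F, hFmono, hFle⟩ with hℱdef
  -- measurability of Y with respect to the filtration
  have hY0F : ∀ n, Measurable[F n] (Y 0) := by
    intro n
    have h1 : Measurable[MeasurableSpace.comap (f 0) inferInstance] (Y 0) := by
      apply measurable_iff_comap_le.2
      simp only [hf, if_pos]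
      exact le_rfl
    exact h1.mono (le_iSup₂ (f := fun i (_ : i ∈ Set.Iic n) =>
      MeasurableSpace.comap (f i) inferInstance) 0 (Set.mem_Iic.2 (Nat.zero_le n))) le_rfl
  have hεF : ∀ n i, i ≠ 0 → i ≤ n → Measurable[F n] (ε i) := by
    intro n i hi0 hin
    have h1 : Measurable[MeasurableSpace.comap (f i) inferInstance] (ε i) := by
      apply measurable_iff_comap_le.2
      simp only [hf, if_neg hi0]
      exact le_rfl
    exact h1.mono (le_iSup₂ (f := fun j (_ : j ∈ Set.Iic n) =>
      MeasurableSpace.comap (f j) inferInstance) i (Set.mem_Iic.2 hin)) le_rfl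
  have hεG : ∀ n i, n < i → Measurable[G n] (ε i) := by
    intro n i hin
    have hi0 : i ≠ 0 := by omega
    have h1 : Measurable[MeasurableSpace.comap (f i) inferInstance] (ε i) := by
      apply measurable_iff_comap_le.2
      simp only [hf, if_neg hi0]
      exact le_rfl
    exact h1.mono (le_iSup₂ (f := fun j (_ : j ∈ Set.Ioi n) =>
      MeasurableSpace.comap (f j) inferInstance) i (Set.mem_Ioi.2 hin)) le_rfl
  have hYF : ∀ t n, t ≤ n → Measurable[F n] (Y t) := by
    intro t
    induction t with
    | zero => exact fun n _ => hY0F n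
    | succ t ih =>
      intro n hn
      have hYt : Measurable[F n] (Y t) := ih n (by omega)
      have hrec : Y (t+1) = fun ω =>
          (if r < Y t ω then α * Y t ω else β * Y t ω) + ε (t+1) ω :=
        funext (hTAR.recursion t)
      rw [hrec]
      exact (Measurable.ite (measurableSet_lt measurable_const hYt)
        (hYt.const_mul α) (hYt.const_mul β)).add (hεF n (t+1) (by omega) hn)
  have hmeasY : ∀ t, Measurable (Y t) := fun t => (hYF t t le_rfl).mono (hFle t) le_rfl
  -- noise tail sums
  set q : ℝ := α⁻¹ with hqdef
  have hq0 : 0 < q := inv_pos.2 hα0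
  have hq1 : q < 1 := inv_lt_one_of_one_lt₀ hα
  set S : ℕ → ℕ → Ω → ℝ :=
    fun n m ω => ∑ k ∈ Finset.range m, q ^ (k+1) * |ε (n+1+k) ω| with hSdef
  have hSmeasG : ∀ n m, Measurable[G n] (S n m) := by
    intro n m
    induction m with
    | zero =>
      have : S n 0 = fun _ => (0:ℝ) := by
        funext ω; simp [hSdef]
      rw [this]; exact measurable_const
    | succ m ih =>
      have : S n (m+1) = fun ω => S n m ω + q^(m+1) * |ε (n+1+m) ω| := by
        funext ω; simp only [hSdef]; rw [Finset.sum_range_succ]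
      rw [this]
      have hmul : Measurable[G n] fun ω => q^(m+1) * |ε (n+1+m) ω| := by
        have h1 : Measurable[G n] fun ω => |ε (n+1+m) ω| :=
          measurable_abs.comp (hεG n (n+1+m) (by omega))
        exact measurable_const.mul h1
      exact ih.add hmul
  have hSmeas : ∀ n m, Measurable (S n m) :=
    fun n m => (hSmeasG n m).mono (hGle n) le_rfl
  have hSnonneg : ∀ n m ω, 0 ≤ S n m ω := by
    intro n m ω
    apply Finset.sum_nonneg
    intro k _
    positivity
  have hSmono : ∀ n ω, Monotone fun m => S n m ω := by
    intro n ω a b hab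
    apply Finset.sum_le_sum_of_subset_of_nonneg (Finset.range_subset_range.2 hab)
    intro k _ _
    positivity
  set I : ℝ≥0∞ := ∫⁻ ω, ENNReal.ofReal |ε 1 ω| ∂μ with hIdef
  have hIlt : I < ∞ := by
    have h1 := hTAR.integrable.2
    rw [hasFiniteIntegral_iff_norm] at h1
    simpa only [Real.norm_eq_abs] using h1
  have hIident : ∀ j, ∫⁻ ω, ENNReal.ofReal |ε j ω| ∂μ = I := by
    intro j
    exact ((hTAR.ident j 1).comp
      (ENNReal.measurable_ofReal.comp measurable_abs)).lintegral_eq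
  have hSint : ∀ n m, ∫⁻ ω, ENNReal.ofReal (S n m ω) ∂μ ≤ ENNReal.ofReal (1-q)⁻¹ * I := by
    intro n m
    have hterm : ∀ k, Measurable fun ω => ENNReal.ofReal (q ^ (k+1) * |ε (n+1+k) ω|) := by
      intro k
      exact ENNReal.measurable_ofReal.comp (((hTAR.meas_eps (n+1+k)).abs).const_mul _)
    calc ∫⁻ ω, ENNReal.ofReal (S n m ω) ∂μ
        = ∫⁻ ω, ∑ k ∈ Finset.range m, ENNReal.ofReal (q ^ (k+1) * |ε (n+1+k) ω|) ∂μ := by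
          apply lintegral_congr
          intro ω
          rw [hSdef]
          exact ENNReal.ofReal_sum_of_nonneg fun k _ => by positivity
      _ = ∑ k ∈ Finset.range m, ∫⁻ ω, ENNReal.ofReal (q ^ (k+1) * |ε (n+1+k) ω|) ∂μ :=
          lintegral_finset_sum _ fun k _ => hterm k
      _ = ∑ k ∈ Finset.range m, ENNReal.ofReal (q ^ (k+1)) * I := by
          apply Finset.sum_congr rfl
          intro k _
          rw [← hIident (n+1+k), ← lintegral_const_mul _
            ((hTAR.meas_eps (n+1+k)).abs.ennreal_ofReal)]
          apply lintegral_congr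
          intro ω
          rw [← ENNReal.ofReal_mul (by positivity)]
      _ = (∑ k ∈ Finset.range m, ENNReal.ofReal (q ^ (k+1))) * I := by
          rw [Finset.sum_mul]
      _ ≤ ENNReal.ofReal (1-q)⁻¹ * I := by
          apply mul_le_mul_left
          rw [← ENNReal.ofReal_sum_of_nonneg fun k _ => by positivity]
          apply ENNReal.ofReal_le_ofReal
          have h1 : ∑ k ∈ Finset.range m, q ^ (k+1) ≤ ∑ k ∈ Finset.range m, q ^ k :=
            Finset.sum_le_sum fun k _ =>
              pow_le_pow_of_le_one hq0.le hq1.le (by omega)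
          refine h1.trans ?_
          have h2 : ∑ k ∈ Finset.range m, q ^ k = (1 - q ^ m) / (1 - q) := by
            rw [geom_sum_eq (ne_of_lt hq1)]
            rw [div_eq_div_iff (by linarith) (by linarith)]
            ring
          rw [h2, ← one_div]
          have h3 := pow_nonneg hq0.le m
          gcongr <;> linarith
  -- choice of the level K
  set J : ℝ≥0∞ := ENNReal.ofReal (1-q)⁻¹ * I with hJdef
  have hJlt : J < ∞ := ENNReal.mul_lt_top ENNReal.ofReal_lt_top hIlt
  set K : ℝ := max (max r 0 + 1) (2 * J.toReal + 1) with hKdef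
  have hK1 : (1:ℝ) ≤ K := le_trans (by have := le_max_right r (0:ℝ); linarith) (le_max_left _ _)
  have hKne : ENNReal.ofReal K ≠ 0 := by
    simp only [ne_eq, ENNReal.ofReal_eq_zero, not_le]; linarith
  have hK2 : 2 * J + 1 ≤ ENNReal.ofReal K := by
    have h1 : ENNReal.ofReal (2 * J.toReal + 1) ≤ ENNReal.ofReal K :=
      ENNReal.ofReal_le_ofReal (le_max_right _ _)
    refine le_trans (le_of_eq ?_) h1
    rw [ENNReal.ofReal_add (by positivity) zero_le_one, ENNReal.ofReal_one,
      ENNReal.ofReal_mul (by norm_num), ENNReal.ofReal_ofNat,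
      ENNReal.ofReal_toReal hJlt.ne]
  have hdiv : J / ENNReal.ofReal K ≤ 2⁻¹ := by
    apply ENNReal.div_le_of_le_mul
    calc J ≤ 2⁻¹ * (2 * J + 1) := by
          rw [mul_add, ← mul_assoc, ENNReal.inv_mul_cancel (by norm_num) (by norm_num), one_mul]
          exact le_self_add
      _ ≤ 2⁻¹ * ENNReal.ofReal K := mul_le_mul_right hK2 _
  -- events of controlled noise
  set C : ℕ → Set Ω := fun n => {ω | ∀ m, S n m ω ≤ K} with hCdef
  have hCmeasG : ∀ n, MeasurableSet[G n] (C n) := by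
    intro n
    have : C n = ⋂ m, {ω | S n m ω ≤ K} := by
      ext ω; simp [hCdef, Set.mem_iInter]
    rw [this]
    exact MeasurableSet.iInter fun m => measurableSet_le (hSmeasG n m) measurable_const
  have hCmeas : ∀ n, MeasurableSet (C n) := fun n => hGle n _ (hCmeasG n)
  have hCbound : ∀ n, (2:ℝ≥0∞)⁻¹ ≤ μ (C n) := by
    intro n
    have hsub : (C n)ᶜ ⊆ ⋃ m, {ω | ENNReal.ofReal K ≤ ENNReal.ofReal (S n m ω)} := by
      intro ω hω
      simp only [hCdef, Set.mem_compl_iff, Set.mem_setOf_eq, not_forall, not_le] at hω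
      obtain ⟨m, hm⟩ := hω
      exact Set.mem_iUnion.2 ⟨m, ENNReal.ofReal_le_ofReal hm.le⟩
    have hmarkov : ∀ m, μ {ω | ENNReal.ofReal K ≤ ENNReal.ofReal (S n m ω)} ≤ 2⁻¹ := by
      intro m
      calc μ {ω | ENNReal.ofReal K ≤ ENNReal.ofReal (S n m ω)}
          ≤ (∫⁻ ω, ENNReal.ofReal (S n m ω) ∂μ) / ENNReal.ofReal K :=
            meas_ge_le_lintegral_div ((hSmeas n m).ennreal_ofReal.aemeasurable)
              hKne ENNReal.ofReal_ne_top
        _ ≤ J / ENNReal.ofReal K := by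
            exact ENNReal.div_le_div_right (hSint n m) _
        _ ≤ 2⁻¹ := hdiv
    have hdir : Directed (· ⊆ ·)
        (fun m => {ω | ENNReal.ofReal K ≤ ENNReal.ofReal (S n m ω)}) := by
      apply Monotone.directed_le
      intro a b hab ω hω
      exact le_trans hω (ENNReal.ofReal_le_ofReal (hSmono n ω hab))
    have hcompl : μ (C n)ᶜ ≤ 2⁻¹ := by
      refine le_trans (measure_mono hsub) ?_
      rw [hdir.measure_iUnion]
      exact iSup_le hmarkov
    have hsum := measure_add_measure_compl (μ := μ) (hCmeas n)
    rw [measure_univ] at hsum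
    have h2 : (1:ℝ≥0∞) ≤ μ (C n) + 2⁻¹ := by
      rw [← hsum]; exact add_le_add_right hcompl _
    calc (2:ℝ≥0∞)⁻¹ = 1 - 2⁻¹ := ENNReal.one_sub_inv_two.symm
      _ ≤ μ (C n) := tsub_le_iff_right.2 h2
  -- target set and indicator
  set A : Set Ω := ⋂ (M : ℕ), ⋃ (N : ℕ), ⋂ (t : ℕ),
    {ω | N ≤ t → (M:ℝ) ≤ Y t ω / t} with hAdef
  have hAmem_iff : ∀ ω, ω ∈ A ↔ ∀ M : ℕ, ∃ N : ℕ, ∀ t : ℕ, N ≤ t → (M:ℝ) ≤ Y t ω / t := by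
    intro ω
    simp only [hAdef, Set.mem_iInter, Set.mem_iUnion, Set.mem_setOf_eq]
  have hAtend : ∀ ω, ω ∈ A → Tendsto (fun t : ℕ => Y t ω / t) atTop atTop := by
    intro ω hω
    rw [tendsto_atTop]
    intro b
    obtain ⟨N, hN⟩ := (hAmem_iff ω).1 hω ⌈b⌉₊
    exact eventually_atTop.2 ⟨N, fun t ht => le_trans (Nat.le_ceil b) (hN t ht)⟩
  have hFtop_le : (⨆ n, F n) ≤ ‹MeasurableSpace Ω› := iSup_le hFle
  have hYtop : ∀ t, Measurable[⨆ n, F n] (Y t) :=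
    fun t => (hYF t t le_rfl).mono (le_iSup F t) le_rfl
  have hAmeasF : MeasurableSet[⨆ n, F n] A := by
    refine MeasurableSet.iInter fun M => MeasurableSet.iUnion fun N =>
      MeasurableSet.iInter fun t => ?_
    by_cases h : N ≤ t
    · have heq : {ω | N ≤ t → (M:ℝ) ≤ Y t ω / t} = {ω | (M:ℝ) ≤ Y t ω / t} := by
        ext ω; simp [h]
      rw [heq]
      exact measurableSet_le measurable_const ((hYtop t).div_const _)
    · have heq : {ω | N ≤ t → (M:ℝ) ≤ Y t ω / t} = Set.univ := by
        ext ω; simp [h]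
      rw [heq]
      exact MeasurableSet.univ
  have hAmeas : MeasurableSet A := hFtop_le _ hAmeasF
  set g : Ω → ℝ := A.indicator (fun _ => 1) with hgdef
  have hgint : Integrable g μ := (integrable_const 1).indicator hAmeas
  have hgmeasF : StronglyMeasurable[⨆ n, F n] g :=
    stronglyMeasurable_const.indicator hAmeasF
  have hconv := hgint.tendsto_ae_condExp (ℱ := ℱ) hgmeasF
  -- the good events on which Y is large
  set B : ℕ → Set Ω := fun n => {ω | max r 0 + K < Y n ω} with hBdef
  have hBmeasF : ∀ n, MeasurableSet[F n] (B n) :=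
    fun n => measurableSet_lt measurable_const (hYF n n le_rfl)
  have hBC_sub : ∀ n, B n ∩ C n ⊆ A := by
    intro n ω hω
    obtain ⟨hB, hC⟩ := hω
    have htd : Tendsto (fun t : ℕ => Y t ω / t) atTop atTop := by
      refine tar1_aux_escape (b := β) (u := fun t => Y t ω) (e := fun t => ε t ω) hα
        (fun t => hTAR.recursion t ω) (n := n) (K := K) (fun m => hC m) hB
    rw [hAmem_iff]
    intro M
    obtain ⟨N, hN⟩ := eventually_atTop.1 (tendsto_atTop.1 htd (M:ℝ))
    exact ⟨N, hN⟩
  -- the conditional expectation bound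
  have hcond : ∀ n, ∀ᵐ ω ∂μ, ω ∈ B n → (2:ℝ)⁻¹ ≤ (μ[g | F n]) ω := by
    intro n
    have hBa : MeasurableSet (B n) := hFle n _ (hBmeasF n)
    have hCa : MeasurableSet (C n) := hCmeas n
    have hint1 : Integrable ((B n ∩ C n).indicator fun _ => (1:ℝ)) μ :=
      (integrable_const 1).indicator (hBa.inter hCa)
    have hle1 : (B n ∩ C n).indicator (fun _ => (1:ℝ)) ≤ᵐ[μ] g := by
      apply Eventually.of_forall
      intro ω
      exact Set.indicator_le_indicator_of_subset (hBC_sub n) (fun _ => zero_le_one) ω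
    have hmono := condExp_mono (m := F n) hint1 hgint hle1
    have heq2 : (B n ∩ C n).indicator (fun _ => (1:ℝ))
        = (B n).indicator ((C n).indicator fun _ => (1:ℝ)) := by
      rw [Set.indicator_indicator]
    have hCint : Integrable ((C n).indicator fun _ => (1:ℝ)) μ :=
      (integrable_const 1).indicator hCa
    have hind := condExp_indicator (m := F n) hCint (hBmeasF n)
    have hcie := condExp_indep_eq (f := (C n).indicator fun _ => (1:ℝ)) (hGle n) (hFle n)
      ((stronglyMeasurable_const (β := ℝ)).indicator (hCmeasG n)) (hindep_FG n).symm
    have hval : ∫ ω, (C n).indicator (fun _ => (1:ℝ)) ω ∂μ = (μ (C n)).toReal := by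
      rw [integral_indicator_const _ hCa]; simp; rfl
    have hp : (2:ℝ)⁻¹ ≤ (μ (C n)).toReal := by
      have h2 : ((2:ℝ≥0∞)⁻¹).toReal ≤ (μ (C n)).toReal :=
        ENNReal.toReal_mono (measure_ne_top μ _) (hCbound n)
      simpa using h2
    filter_upwards [hmono, hind, hcie] with ω hω1 hω2 hω3 hωB
    rw [heq2] at hω1
    calc (2:ℝ)⁻¹ ≤ (μ (C n)).toReal := hp
      _ = (μ[(C n).indicator (fun _ => (1:ℝ)) | F n]) ω := by rw [hω3, ← hval]
      _ = (B n).indicator (μ[(C n).indicator (fun _ => (1:ℝ)) | F n]) ω :=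
          (Set.indicator_of_mem hωB _).symm
      _ = (μ[(B n).indicator ((C n).indicator fun _ => (1:ℝ)) | F n]) ω := hω2.symm
      _ ≤ (μ[g | F n]) ω := hω1
  have hcond_all : ∀ᵐ ω ∂μ, ∀ n, ω ∈ B n → (2:ℝ)⁻¹ ≤ (μ[g | F n]) ω :=
    (ae_all_iff).2 hcond
  filter_upwards [hconv, hlimsup, hcond_all] with ω h1 h2 h3
  have hfreq : ∃ᶠ n in atTop, (2:ℝ)⁻¹ ≤ (μ[g | F n]) ω := by
    apply (h2 (max r 0 + K)).mono
    intro n hn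
    exact h3 n hn
  have hg1 : (2:ℝ)⁻¹ ≤ g ω := by
    by_contra hlt
    push_neg at hlt
    have hev : ∀ᶠ n in atTop, (μ[g | F n]) ω < 2⁻¹ :=
      h1.eventually (Iio_mem_nhds hlt)
    obtain ⟨n, hn1, hn2⟩ := (hfreq.and_eventually hev).exists
    exact absurd hn1 (not_le.2 hn2)
  have hmem : ω ∈ A := by
    by_contra hnot
    rw [hgdef, Set.indicator_of_notMem hnot] at hg1
    norm_num at hg1
  exact hAtend ω hmem


end
end

section
/- Let {ε_j : j ≥ 1} be i.i.d. real random variables with E|ε₁| < ∞ and P(ε₁ ≤ x) < 1 for every real x, and let 0 < β < 1. Then the series Σ_{j=1}^∞ β^{j−1} ε_j converges almost surely and for every real x one has P( Σ_{j=1}^∞ β^{j−1} ε_j ≤ x ) < 1. -/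
open MeasureTheory ProbabilityTheory Filter
open scoped Topology NNReal ENNReal

noncomputable section

lemma my_measurable_tsum_real {Ω : Type*} {m : MeasurableSpace Ω} {g : ℕ → Ω → ℝ}
    (hg : ∀ n, Measurable[m] (g n)) : Measurable[m] fun ω => ∑' n, g n ω := by
  have hu : Measurable[m] fun ω => ∑' n, (‖g n ω‖₊ : ℝ≥0∞) :=
    Measurable.ennreal_tsum fun n => (hg n).nnnorm.coe_nnreal_ennreal
  set s : Set Ω := {ω | (∑' n, (‖g n ω‖₊ : ℝ≥0∞)) ≠ ∞} with hs
  have hsm : MeasurableSet[m] s := (hu (measurableSet_singleton ∞)).compl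
  have hsum : ∀ ω, ω ∈ s ↔ Summable fun n => g n ω := by
    intro ω
    constructor
    · intro h
      exact Summable.of_nnnorm (ENNReal.tsum_coe_ne_top_iff_summable.mp h)
    · intro h
      refine ENNReal.tsum_coe_ne_top_iff_summable.mpr ?_
      rw [← NNReal.summable_coe]
      simpa [Real.norm_eq_abs] using h.abs
  have key : Tendsto (fun (n : ℕ) (ω : Ω) => s.indicator (fun ω => ∑ j ∈ Finset.range n, g j ω) ω)
      atTop (𝓝 (fun ω => ∑' n, g n ω)) := by
    rw [tendsto_pi_nhds]
    intro ω
    by_cases hω : ω ∈ s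
    · have hsummable := (hsum ω).mp hω
      simp only [Set.indicator_of_mem hω]
      exact hsummable.hasSum.tendsto_sum_nat
    · simp only [Set.indicator_of_notMem hω]
      rw [tsum_eq_zero_of_not_summable (fun h => hω ((hsum ω).mpr h))]
      exact tendsto_const_nhds
  exact measurable_of_tendsto_metrizable
    (fun n => ((Finset.measurable_sum _ fun j _ => hg j).indicator hsm)) key

lemma my_ae_summable
    {Ω : Type*} [MeasurableSpace Ω] {μ : Measure Ω} [IsProbabilityMeasure μ]
    {ε : ℕ → Ω → ℝ}
    (hmeas : ∀ i, Measurable (ε i))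
    (hident : ∀ i j, IdentDistrib (ε i) (ε j) μ μ)
    (hint : Integrable (ε 1) μ)
    {β : ℝ} (hβ0 : 0 < β) (hβ1 : β < 1) (k : ℕ) :
    ∀ᵐ ω ∂μ, Summable fun j : ℕ => β ^ j * ε (j + k) ω := by
  set C : ℝ≥0∞ := ∫⁻ ω, (‖ε 1 ω‖₊ : ℝ≥0∞) ∂μ with hC
  have hCfin : C ≠ ∞ := hint.hasFiniteIntegral.ne
  have hCi : ∀ i, ∫⁻ ω, (‖ε i ω‖₊ : ℝ≥0∞) ∂μ = C :=
    fun i => ((hident i 1).nnnorm.coe_nnreal_ennreal).lintegral_eq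
  have hlin : ∫⁻ ω, (∑' j, (‖β ^ j * ε (j + k) ω‖₊ : ℝ≥0∞)) ∂μ
      = ∑' j, ∫⁻ ω, (‖β ^ j * ε (j + k) ω‖₊ : ℝ≥0∞) ∂μ :=
    lintegral_tsum fun j => ((hmeas (j + k)).const_mul _).nnnorm.coe_nnreal_ennreal.aemeasurable
  have hterm : ∀ j : ℕ, ∫⁻ ω, (‖β ^ j * ε (j + k) ω‖₊ : ℝ≥0∞) ∂μ
      = (‖β‖₊ : ℝ≥0∞) ^ j * C := by
    intro j
    have : ∀ ω, (‖β ^ j * ε (j + k) ω‖₊ : ℝ≥0∞) = (‖β‖₊ : ℝ≥0∞) ^ j * (‖ε (j + k) ω‖₊ : ℝ≥0∞) := by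
      intro ω
      rw [nnnorm_mul, nnnorm_pow, ENNReal.coe_mul, ENNReal.coe_pow]
    simp_rw [this]
    rw [lintegral_const_mul _ ((hmeas (j + k)).nnnorm.coe_nnreal_ennreal), hCi]
  have hβlt : (‖β‖₊ : ℝ≥0∞) < 1 := by
    rw [← ENNReal.coe_one, ENNReal.coe_lt_coe, ← NNReal.coe_lt_coe]
    simpa [Real.norm_eq_abs, abs_of_pos hβ0] using hβ1
  have htot : ∫⁻ ω, (∑' j, (‖β ^ j * ε (j + k) ω‖₊ : ℝ≥0∞)) ∂μ ≠ ∞ := by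
    rw [hlin]
    simp_rw [hterm]
    rw [ENNReal.tsum_mul_right, ENNReal.tsum_geometric]
    refine ENNReal.mul_ne_top ?_ hCfin
    rw [ENNReal.inv_ne_top]
    simpa [tsub_eq_zero_iff_le] using hβlt.not_ge
  have hae : ∀ᵐ ω ∂μ, (∑' j, (‖β ^ j * ε (j + k) ω‖₊ : ℝ≥0∞)) < ∞ :=
    ae_lt_top (Measurable.ennreal_tsum fun j =>
      ((hmeas (j + k)).const_mul _).nnnorm.coe_nnreal_ennreal) htot
  filter_upwards [hae] with ω hω
  exact Summable.of_nnnorm (ENNReal.tsum_coe_ne_top_iff_summable.mp hω.ne)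

/-- If `{ε_j : j ≥ 1}` are i.i.d., integrable, with `P(ε₁ ≤ x) < 1` for every `x`, and
`0 < β < 1`, then `Σ_{j≥1} β^{j-1} ε_j` converges a.s. and its law puts no mass one on any
left half-line: `P(Σ_{j≥1} β^{j-1} ε_j ≤ x) < 1` for every `x`. -/
theorem geometric_series_tail_unbounded
    {Ω : Type*} [MeasurableSpace Ω] {μ : Measure Ω} [IsProbabilityMeasure μ]
    {ε : ℕ → Ω → ℝ}
    (hmeas : ∀ i, Measurable (ε i))
    (hident : ∀ i j, IdentDistrib (ε i) (ε j) μ μ)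
    (hindep : iIndepFun ε μ)
    (hint : Integrable (ε 1) μ)
    (hlaw : ∀ x : ℝ, μ {ω | ε 1 ω ≤ x} < 1)
    {β : ℝ} (hβ0 : 0 < β) (hβ1 : β < 1) :
    (∀ᵐ ω ∂μ, Summable fun j : ℕ => β ^ j * ε (j + 1) ω) ∧
    ∀ x : ℝ, μ {ω | (∑' j : ℕ, β ^ j * ε (j + 1) ω) ≤ x} < 1 := by
  have hae : ∀ᵐ ω ∂μ, Summable fun j : ℕ => β ^ j * ε (j + 1) ω :=
    my_ae_summable hmeas hident hint hβ0 hβ1 1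
  refine ⟨hae, fun x => ?_⟩
  -- the tail
  set T : Ω → ℝ := fun ω => ∑' j : ℕ, β ^ j * ε (j + 2) ω with hT
  -- measurability of T with respect to the tail σ-algebra
  have hTm₂ : Measurable[⨆ i ∈ {i : ℕ | 2 ≤ i}, MeasurableSpace.comap (ε i) inferInstance] T := by
    apply my_measurable_tsum_real
    intro j
    have h1 : Measurable[MeasurableSpace.comap (ε (j + 2)) inferInstance] (ε (j + 2)) :=
      fun s hs => ⟨s, hs, rfl⟩
    have h2 : MeasurableSpace.comap (ε (j + 2)) inferInstance
        ≤ ⨆ i ∈ {i : ℕ | 2 ≤ i}, MeasurableSpace.comap (ε i) inferInstance := by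
      exact le_iSup₂ (f := fun (i : ℕ) (_ : i ∈ {i : ℕ | 2 ≤ i}) =>
        MeasurableSpace.comap (ε i) inferInstance) (j + 2) (Nat.le_add_left 2 j)
    exact ((h1.mono h2 le_rfl)).const_mul _
  have hTm : Measurable T :=
    my_measurable_tsum_real fun j => (hmeas (j + 2)).const_mul _
  -- independence of ε 1 from the tail σ-algebra
  have h_le : ∀ i, MeasurableSpace.comap (ε i) inferInstance ≤ (inferInstance : MeasurableSpace Ω) :=
    fun i => (hmeas i).comap_le
  have hindep' : Indep (⨆ i ∈ ({1} : Set ℕ), MeasurableSpace.comap (ε i) inferInstance)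
      (⨆ i ∈ {i : ℕ | 2 ≤ i}, MeasurableSpace.comap (ε i) inferInstance) μ := by
    exact indep_iSup_of_disjoint h_le hindep (by
      intro u hu1 hu2 i hi
      have := hu1 hi
      have := hu2 hi
      simp only [Set.mem_singleton_iff, Set.mem_setOf_eq] at *
      omega)
  have hindep1 : Indep (MeasurableSpace.comap (ε 1) inferInstance)
      (⨆ i ∈ {i : ℕ | 2 ≤ i}, MeasurableSpace.comap (ε i) inferInstance) μ := by
    simpa using hindep'
  -- choose n with positive probability that T ≥ -n
  obtain ⟨n, hn⟩ : ∃ n : ℕ, μ (T ⁻¹' Set.Ici (-(n : ℝ))) ≠ 0 := by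
    by_contra h
    push_neg at h
    have hU : (⋃ n : ℕ, T ⁻¹' Set.Ici (-(n : ℝ))) = Set.univ := by
      ext ω
      simp only [Set.mem_iUnion, Set.mem_preimage, Set.mem_Ici, Set.mem_univ, iff_true]
      obtain ⟨n, hn⟩ := exists_nat_ge (-(T ω))
      exact ⟨n, by linarith⟩
    have := measure_iUnion_null h
    rw [hU, measure_univ] at this
    exact one_ne_zero this
  set A : Set Ω := ε 1 ⁻¹' Set.Ioi (x + β * n) with hA
  set B : Set Ω := T ⁻¹' Set.Ici (-(n : ℝ)) with hB
  have hAmeas : MeasurableSet A := (hmeas 1) measurableSet_Ioi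
  have hBmeas : MeasurableSet B := hTm measurableSet_Ici
  -- μ A > 0
  have hApos : μ A ≠ 0 := by
    have hcompl : Aᶜ = {ω | ε 1 ω ≤ x + β * n} := by
      ext ω; simp [hA, not_lt]
    have h1 : μ Aᶜ < 1 := by rw [hcompl]; exact hlaw _
    intro h0
    have : μ Aᶜ = 1 := by
      have := prob_compl_eq_one_sub (μ := μ) hAmeas
      rw [h0] at this
      simpa using this
    exact absurd this h1.ne
  -- independence gives μ (A ∩ B) = μ A * μ B
  have hAB : μ (A ∩ B) = μ A * μ B := by
    refine (Indep_iff _ _ _).1 hindep1 A B ⟨Set.Ioi (x + β * n), measurableSet_Ioi, rfl⟩ ?_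
    exact hTm₂ measurableSet_Ici
  have hABpos : μ (A ∩ B) ≠ 0 := by
    rw [hAB]
    exact mul_ne_zero hApos hn
  -- on the summable set, inside A ∩ B the sum exceeds x
  have hsub : {ω | (∑' j : ℕ, β ^ j * ε (j + 1) ω) ≤ x} ∩ (A ∩ B)
      ⊆ {ω | ¬ Summable fun j : ℕ => β ^ j * ε (j + 1) ω} := by
    rintro ω ⟨hle, hA', hB'⟩ hsummable
    simp only [Set.mem_setOf_eq] at hle
    have hsplit : (∑' j : ℕ, β ^ j * ε (j + 1) ω) = ε 1 ω + β * T ω := by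
      rw [Summable.tsum_eq_zero_add hsummable]
      congr 1
      · simp
      · rw [hT, ← tsum_mul_left]
        congr 1
        ext j
        rw [pow_succ']
        ring
    have hε1 : x + β * n < ε 1 ω := hA'
    have hTω : -(n : ℝ) ≤ T ω := hB'
    have : β * (-(n : ℝ)) ≤ β * T ω := by nlinarith
    rw [hsplit] at hle
    nlinarith
  have hnull : μ ({ω | (∑' j : ℕ, β ^ j * ε (j + 1) ω) ≤ x} ∩ (A ∩ B)) = 0 := by
    refine measure_mono_null hsub ?_
    simpa [ae_iff] using hae
  -- conclude
  have hbound : μ {ω | (∑' j : ℕ, β ^ j * ε (j + 1) ω) ≤ x} ≤ μ ((A ∩ B)ᶜ) := by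
    calc μ {ω | (∑' j : ℕ, β ^ j * ε (j + 1) ω) ≤ x}
        ≤ μ ({ω | (∑' j : ℕ, β ^ j * ε (j + 1) ω) ≤ x} ∩ (A ∩ B))
          + μ ({ω | (∑' j : ℕ, β ^ j * ε (j + 1) ω) ≤ x} ∩ (A ∩ B)ᶜ) := by
          rw [← measure_inter_add_diff _ (hAmeas.inter hBmeas)]
          exact le_of_eq rfl
      _ = μ ({ω | (∑' j : ℕ, β ^ j * ε (j + 1) ω) ≤ x} ∩ (A ∩ B)ᶜ) := by rw [hnull, zero_add]
      _ ≤ μ ((A ∩ B)ᶜ) := measure_mono Set.inter_subset_right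
  have hfinal : μ ((A ∩ B)ᶜ) < 1 := by
    rw [prob_compl_eq_one_sub (hAmeas.inter hBmeas)]
    exact ENNReal.sub_lt_self ENNReal.one_ne_top one_ne_zero hABpos
  exact lt_of_le_of_lt hbound hfinal

end
end

section
/- Assume the TAR(1) model with common intercept γ: Y_t = γ + α Y_{t−1} + ε_t if Y_{t−1} > r and Y_t = γ + β Y_{t−1} + ε_t if Y_{t−1} ≤ r, with α = 1, β < 1, r ≤ 0 and γ > 0, where E ε₁ = 0, Var ε₁ = σ² ∈ (0,∞). Then Y_n ≥ nγ + Σ_{k=1}^n ε_k + Y₀ for all n ≥ 1; consequently Y_n → ∞ almost surely, and sup_{n≥1} | Y_n − nγ − Σ_{i=1}^n ε_i | < ∞ almost surely (i.e., max_{1≤k≤n} |Y_k − kγ − Σ_{i=1}^k ε_i| = O(1) a.s.). -/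
open MeasureTheory ProbabilityTheory Filter
open scoped Topology NNReal ENNReal

noncomputable section

/-- The TAR(1) model with common intercept `γ`:
`Y (t+1) = γ + α * Y t + ε (t+1)` if `Y t > r`, and `Y (t+1) = γ + β * Y t + ε (t+1)` if
`Y t ≤ r`, where `{ε t : t ≥ 1}` is i.i.d. with mean zero and variance `σ² ∈ (0, ∞)` and
`Y 0` is independent of the innovations. -/
structure IsTAR1Intercept {Ω : Type*} [MeasurableSpace Ω] (μ : Measure Ω)
    (γ α β r σ : ℝ) (ε : ℕ → Ω → ℝ) (Y : ℕ → Ω → ℝ) : Prop where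
  isProb : IsProbabilityMeasure μ
  meas_eps : ∀ t, Measurable (ε t)
  meas_Y0 : Measurable (Y 0)
  ident : ∀ s t, IdentDistrib (ε s) (ε t) μ μ
  indep : iIndepFun ε μ
  indep_Y0 : IndepFun (Y 0) (fun ω t => ε t ω) μ
  integrable : Integrable (ε 1) μ
  mean_zero : ∫ ω, ε 1 ω ∂μ = 0
  sq_int : MemLp (ε 1) 2 μ
  variance_eq : variance (ε 1) μ = σ ^ 2
  sigma_pos : 0 < σ
  recursion : ∀ t ω, Y (t + 1) ω =
    γ + (if r < Y t ω then α * Y t ω else β * Y t ω) + ε (t + 1) ω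

/-- Remark 2.2: if `α = 1`, `β < 1`, `r ≤ 0` and `γ > 0`, then
`Y_n ≥ nγ + Σ_{k=1}^n ε_k + Y₀` for all `n ≥ 1`; consequently `Y_n → ∞` a.s. and
`max_{1≤k≤n} |Y_k - kγ - Σ_{i=1}^k ε_i| = O(1)` a.s. -/
theorem tar1_intercept_drift
    {Ω : Type*} [MeasurableSpace Ω] {μ : Measure Ω} {γ α β r σ : ℝ} {ε Y : ℕ → Ω → ℝ}
    (hTAR : IsTAR1Intercept μ γ α β r σ ε Y)
    (hα : α = 1) (hβ : β < 1) (hr : r ≤ 0) (hγ : 0 < γ) :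
    (∀ ω, ∀ n : ℕ, 1 ≤ n →
      (n : ℝ) * γ + (∑ k ∈ Finset.Icc 1 n, ε k ω) + Y 0 ω ≤ Y n ω) ∧
    (∀ᵐ ω ∂μ, Tendsto (fun n => Y n ω) atTop atTop) ∧
    (∀ᵐ ω ∂μ, ∃ M : ℝ, ∀ n : ℕ, 1 ≤ n →
      |Y n ω - (n : ℝ) * γ - ∑ i ∈ Finset.Icc 1 n, ε i ω| ≤ M) := by
  have sum_succ : ∀ (ω : Ω) (n : ℕ),
      (∑ k ∈ Finset.Icc 1 (n + 1), ε k ω) =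
        (∑ k ∈ Finset.Icc 1 n, ε k ω) + ε (n + 1) ω := by
    intro ω n
    exact Finset.sum_Icc_succ_top (by omega) _
  -- the branch value dominates the identity
  have branch : ∀ x : ℝ, x ≤ (if r < x then α * x else β * x) := by
    intro x
    split_ifs with h
    · rw [hα]; linarith
    · push_neg at h
      nlinarith [mul_nonneg (sub_nonneg.2 hβ.le) (neg_nonneg.2 (h.trans hr))]
  -- Part 1, for all n (trivially true at n = 0)
  have key : ∀ ω, ∀ n : ℕ,
      (n : ℝ) * γ + (∑ k ∈ Finset.Icc 1 n, ε k ω) + Y 0 ω ≤ Y n ω := by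
    intro ω n
    induction n with
    | zero => simp
    | succ n ih =>
        have h1 := branch (Y n ω)
        have h2 := hTAR.recursion n ω
        rw [h2, sum_succ ω n]
        push_cast
        linarith
  refine ⟨fun ω n _ => key ω n, ?_⟩
  -- SLLN for the innovations
  have slln : ∀ᵐ ω ∂μ,
      Tendsto (fun n : ℕ => (∑ i ∈ Finset.range n, ε (i + 1) ω) / n) atTop (𝓝 0) := by
    have h := strong_law_ae_real (fun i => ε (i + 1))
      hTAR.integrable
      (fun i j hij => hTAR.indep.indepFun (by simpa using hij))
      (fun i => hTAR.ident (i + 1) 1)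
    have hmean : (μ[fun ω => ε 1 ω]) = 0 := hTAR.mean_zero
    simpa [hmean] using h
  have hsum_eq : ∀ (ω : Ω) (n : ℕ),
      (∑ i ∈ Finset.range n, ε (i + 1) ω) = ∑ k ∈ Finset.Icc 1 n, ε k ω := by
    intro ω n
    induction n with
    | zero => simp
    | succ n ih => rw [Finset.sum_range_succ, ih, sum_succ]
  -- divergence of the lower bound
  have tendY : ∀ᵐ ω ∂μ, Tendsto (fun n => Y n ω) atTop atTop := by
    filter_upwards [slln] with ω hω
    have h1 : Tendsto (fun n : ℕ => (n : ℝ) * (γ + (∑ i ∈ Finset.range n, ε (i + 1) ω) / n)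
        + Y 0 ω) atTop atTop := by
      apply tendsto_atTop_add_const_right
      exact Filter.Tendsto.atTop_mul_pos (by linarith : (0:ℝ) < γ + 0)
        tendsto_natCast_atTop_atTop (tendsto_const_nhds.add hω)
    apply tendsto_atTop_mono' _ _ h1
    filter_upwards [eventually_ge_atTop 1] with n hn
    have hn' : (0:ℝ) < n := by exact_mod_cast hn
    have : (n : ℝ) * (γ + (∑ i ∈ Finset.range n, ε (i + 1) ω) / n)
        = (n : ℝ) * γ + ∑ k ∈ Finset.Icc 1 n, ε k ω := by
      rw [mul_add, mul_div_cancel₀ _ hn'.ne', hsum_eq]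
    rw [this]
    exact key ω n
  refine ⟨tendY, ?_⟩
  -- Part 3: the deviation is eventually constant
  filter_upwards [tendY] with ω hω
  set D : ℕ → ℝ := fun n => Y n ω - (n : ℝ) * γ - ∑ i ∈ Finset.Icc 1 n, ε i ω with hD
  obtain ⟨N, hN⟩ := (hω.eventually (eventually_gt_atTop r)).exists_forall_of_atTop
  set N' := max N 1 with hN'
  have hconst : ∀ n, N' ≤ n → D n = D N' := by
    intro n hn
    induction n with
    | zero => omega
    | succ n ih =>
        rcases eq_or_lt_of_le hn with h | h
        · rw [← h]
        · have hn' : N' ≤ n := by omega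
          have hrY : r < Y n ω := hN n (le_trans (le_max_left _ _) hn')
          have := hTAR.recursion n ω
          rw [if_pos hrY, hα] at this
          have : D (n + 1) = D n := by
            simp only [hD, this, sum_succ ω n]
            push_cast; ring
          rw [this, ih hn']
  refine ⟨∑ k ∈ Finset.Icc 1 N', |D k|, fun n hn => ?_⟩
  rcases le_or_gt n N' with h | h
  · exact Finset.single_le_sum (f := fun k => |D k|) (fun k _ => abs_nonneg _)
      (Finset.mem_Icc.2 ⟨hn, h⟩)
  · have : |Y n ω - (n : ℝ) * γ - ∑ i ∈ Finset.Icc 1 n, ε i ω| = |D N'| := by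
      rw [show Y n ω - (n : ℝ) * γ - ∑ i ∈ Finset.Icc 1 n, ε i ω = D n from rfl, hconst n h.le]
    rw [this]
    exact Finset.single_le_sum (f := fun k => |D k|) (fun k _ => abs_nonneg _)
      (Finset.mem_Icc.2 ⟨le_max_right _ _, le_rfl⟩)

end
end

section
/- Assume the TAR(1) model with zero intercepts, E Y₀² < ∞, α = 1, β < 1 and r ≤ 0. Let {Y*_t} be the process driven by the same innovations and the same initial value, Y*₀ = Y₀, but with lower-regime slope −1: Y*_t = Y*_{t−1} + ε_t if Y*_{t−1} > r and Y*_t = −Y*_{t−1} + ε_t if Y*_{t−1} ≤ r. Then (1/n) · E[ max_{1≤k≤n} |Y_k − Y*_k|² ] → 0 as n → ∞. -/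
open MeasureTheory ProbabilityTheory Filter
open scoped Topology NNReal ENNReal

noncomputable section

/-- Running maximum of `|f j|` over `1 ≤ j ≤ n` (with value `0` for `n = 0`). -/
def tarRMax (f : ℕ → ℝ) : ℕ → ℝ
  | 0 => 0
  | n + 1 => max (tarRMax f n) |f (n + 1)|

lemma tarRMax_nonneg (f : ℕ → ℝ) : ∀ n, 0 ≤ tarRMax f n
  | 0 => le_refl 0
  | n + 1 => le_trans (tarRMax_nonneg f n) (le_max_left _ _)

lemma tarRMax_succ_le (f : ℕ → ℝ) (n : ℕ) : tarRMax f n ≤ tarRMax f (n + 1) :=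
  le_max_left _ _

lemma tarRMax_mono (f : ℕ → ℝ) : Monotone (tarRMax f) :=
  monotone_nat_of_le_succ (tarRMax_succ_le f)

lemma abs_le_tarRMax (f : ℕ → ℝ) (n : ℕ) : |f (n + 1)| ≤ tarRMax f (n + 1) :=
  le_max_right _ _

lemma tarRMax_sq_le (f : ℕ → ℝ) (M : ℝ) (hM : 0 ≤ M) (n : ℕ) :
    (tarRMax f n) ^ 2 ≤ M + ∑ j ∈ Finset.Icc 1 n, max ((f j) ^ 2 - M) 0 := by
  induction n with
  | zero => simpa [tarRMax] using hM
  | succ n ih =>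
    have hsum : ∑ j ∈ Finset.Icc 1 (n + 1), max ((f j) ^ 2 - M) 0
        = (∑ j ∈ Finset.Icc 1 n, max ((f j) ^ 2 - M) 0) + max ((f (n + 1)) ^ 2 - M) 0 :=
      Finset.sum_Icc_succ_top (Nat.succ_le_succ (Nat.zero_le n)) _
    have hnonneg : 0 ≤ ∑ j ∈ Finset.Icc 1 n, max ((f j) ^ 2 - M) 0 :=
      Finset.sum_nonneg fun j _ => le_max_right _ _
    have hlast : (f (n + 1)) ^ 2 ≤ M + max ((f (n + 1)) ^ 2 - M) 0 := by
      rcases le_total ((f (n + 1)) ^ 2) M with h3 | h3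
      · have := le_max_right ((f (n + 1)) ^ 2 - M) 0; linarith
      · rw [max_eq_left (by linarith)]; linarith
    rcases le_total (tarRMax f n) |f (n + 1)| with h | h
    · have h1 : tarRMax f (n + 1) = |f (n + 1)| := max_eq_right h
      rw [h1, sq_abs, hsum]
      linarith
    · have h1 : tarRMax f (n + 1) = tarRMax f n := max_eq_left h
      rw [h1, hsum]
      have := le_max_right ((f (n + 1)) ^ 2 - M) 0
      linarith

set_option maxHeartbeats 2000000 in
/-- Step in the proof of Theorem 3.1: if `α = 1`, `β < 1`, `r ≤ 0`, and `Y*` is the TAR(1)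
process with the same innovations and initial value but lower-regime slope `-1`, then
`E[max_{1≤k≤n} |Y_k - Y*_k|²] / n → 0`. -/
theorem tar1_comparison_process
    {Ω : Type*} [MeasurableSpace Ω] {μ : Measure Ω} {α β r σ : ℝ} {ε Y : ℕ → Ω → ℝ}
    (hTAR : IsTAR1 μ α β r σ ε Y) (hY0 : MemLp (Y 0) 2 μ)
    (hα : α = 1) (hβ : β < 1) (hr : r ≤ 0)
    (Ystar : ℕ → Ω → ℝ)
    (hstar0 : ∀ ω, Ystar 0 ω = Y 0 ω)
    (hstar : ∀ t ω, Ystar (t + 1) ω =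
      (if r < Ystar t ω then Ystar t ω else -Ystar t ω) + ε (t + 1) ω) :
    Tendsto (fun n : ℕ =>
        (∫ ω, (⨆ k ∈ Finset.Icc 1 n, (Y k ω - Ystar k ω) ^ 2) ∂μ) / n)
      atTop (𝓝 0) := by
  subst hα
  haveI := hTAR.isProb
  -- constants
  set b : ℝ := max β 0 with hbdef
  have hb0 : 0 ≤ b := le_max_right _ _
  have hb1 : b < 1 := max_lt hβ one_pos
  set S : ℝ := (1 - b)⁻¹ with hSdef
  have hS0 : 0 < S := inv_pos.mpr (by linarith)
  have h1bS : (1 - b) * S = 1 := by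
    rw [hSdef]
    exact mul_inv_cancel₀ (by linarith)
  have hbS : b * S + 1 = S := by linarith [h1bS]
  have hS1 : 1 ≤ S := by nlinarith [mul_nonneg hb0 hS0.le]
  set K : ℝ := |r| * S with hKdef
  have hK0 : 0 ≤ K := mul_nonneg (abs_nonneg r) hS0.le
  have hKr : |r| ≤ K := le_mul_of_one_le_right (abs_nonneg r) hS1
  have hKb : b * K + |r| = K := by
    calc b * K + |r| = |r| * (b * S + 1) := by rw [hKdef]; ring
      _ = K := by rw [hbS, hKdef]
  set c : ℝ := 2 + |β| with hcdef
  have hc0 : 0 < c := by have := abs_nonneg β; linarith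
  -- the dominating process
  set E : ℕ → Ω → ℝ := fun n ω => tarRMax (fun j => ε j ω) n with hE
  set B : ℕ → Ω → ℝ := fun n ω => K + |Y 0 ω| + S * E n ω with hB
  clear_value B
  clear_value E
  clear_value c
  clear_value K
  clear_value S
  clear_value b
  have hEnn : ∀ n ω, 0 ≤ E n ω := by
    intro n ω
    simp only [hE]
    exact tarRMax_nonneg _ n
  have hEmono : ∀ (ω : Ω) {m n : ℕ}, m ≤ n → E m ω ≤ E n ω := by
    intro ω m n hmn
    simp only [hE]
    exact tarRMax_mono _ hmn
  have hEabs : ∀ n ω, |ε (n + 1) ω| ≤ E (n + 1) ω := by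
    intro n ω
    simp only [hE]
    exact abs_le_tarRMax (fun j => ε j ω) n
  have hB0 : ∀ n ω, 0 ≤ B n ω := by
    intro n ω
    have h1 := hEnn n ω
    have h2 := abs_nonneg (Y 0 ω)
    have h3 := mul_nonneg hS0.le h1
    simp only [hB]
    linarith
  have hBr : ∀ n ω, |r| ≤ B n ω := by
    intro n ω
    have h3 := mul_nonneg hS0.le (hEnn n ω)
    have h2 := abs_nonneg (Y 0 ω)
    simp only [hB]
    linarith
  have hBmono : ∀ (ω : Ω) {m n : ℕ}, m ≤ n → B m ω ≤ B n ω := by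
    intro ω m n hmn
    have h1 := hEmono ω hmn
    have h2 := mul_le_mul_of_nonneg_left h1 hS0.le
    simp only [hB]
    linarith
  have hBstep : ∀ n ω, b * B n ω + |ε (n + 1) ω| ≤ B (n + 1) ω := by
    intro n ω
    have h1 : E n ω ≤ E (n + 1) ω := hEmono ω (Nat.le_succ n)
    have h2 := hEabs n ω
    have t1 : b * |Y 0 ω| ≤ |Y 0 ω| := mul_le_of_le_one_left (abs_nonneg _) hb1.le
    have t2 : b * (S * E n ω) ≤ b * (S * E (n + 1) ω) :=
      mul_le_mul_of_nonneg_left (mul_le_mul_of_nonneg_left h1 hS0.le) hb0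
    have t3 : S * E (n + 1) ω = b * (S * E (n + 1) ω) + E (n + 1) ω := by
      calc S * E (n + 1) ω = (b * S + 1) * E (n + 1) ω := by rw [hbS]
        _ = b * (S * E (n + 1) ω) + E (n + 1) ω := by ring
    have h4 := abs_nonneg r
    simp only [hB]
    nlinarith [hKb]
  have hBre : ∀ n ω, |r| + |ε (n + 1) ω| ≤ B (n + 1) ω := by
    intro n ω
    have h2 := hEabs n ω
    have h3 : |ε (n + 1) ω| ≤ S * E (n + 1) ω := by nlinarith [hEnn (n + 1) ω]
    have h4 := abs_nonneg (Y 0 ω)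
    simp only [hB]
    linarith
  -- lower bounds on the processes in the lower regime
  have hYlow : ∀ (ω : Ω) (n : ℕ), Y n ω ≤ r → -(B n ω) ≤ Y n ω := by
    intro ω n
    induction n with
    | zero =>
      intro _
      have h1 : |Y 0 ω| ≤ B 0 ω := by
        have := mul_nonneg hS0.le (hEnn 0 ω)
        simp only [hB]; linarith
      have := neg_abs_le (Y 0 ω)
      linarith
    | succ n ih =>
      intro _
      rw [hTAR.recursion n ω]
      by_cases h : r < Y n ω
      · rw [if_pos h, one_mul]
        have h1 := hBre n ω
        have h2 := neg_abs_le (ε (n + 1) ω)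
        have h3 : -|r| ≤ r := neg_abs_le r
        linarith
      · rw [if_neg h]
        push_neg at h
        have hyn : Y n ω ≤ 0 := le_trans h hr
        have hlb : -(B n ω) ≤ Y n ω := ih h
        have hstep := hBstep n ω
        have he := neg_abs_le (ε (n + 1) ω)
        have hkey : -(b * B n ω) ≤ β * Y n ω := by
          rcases le_total β 0 with hb' | hb'
          · have p1 : 0 ≤ β * Y n ω := by
              nlinarith [mul_nonneg (neg_nonneg.mpr hb') (neg_nonneg.mpr hyn)]
            have p2 : 0 ≤ b * B n ω := mul_nonneg hb0 (hB0 n ω)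
            linarith
          · have hbb : β ≤ b := by rw [hbdef]; exact le_max_left β 0
            have p1 : β * (-(B n ω)) ≤ β * Y n ω := mul_le_mul_of_nonneg_left hlb hb'
            have p2 : β * B n ω ≤ b * B n ω := mul_le_mul_of_nonneg_right hbb (hB0 n ω)
            nlinarith
        linarith
  have hZlow : ∀ (ω : Ω) (n : ℕ), Ystar n ω ≤ r → -(B n ω) ≤ Ystar n ω := by
    intro ω n
    induction n with
    | zero =>
      intro _
      rw [hstar0]
      have h1 : |Y 0 ω| ≤ B 0 ω := by
        have := mul_nonneg hS0.le (hEnn 0 ω)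
        simp only [hB]; linarith
      have := neg_abs_le (Y 0 ω)
      linarith
    | succ n _ =>
      intro _
      rw [hstar n ω]
      have h1 := hBre n ω
      have h2 := neg_abs_le (ε (n + 1) ω)
      have h3 : -|r| ≤ r := neg_abs_le r
      have h4 := abs_nonneg r
      by_cases h : r < Ystar n ω
      · rw [if_pos h]
        linarith
      · rw [if_neg h]
        push_neg at h
        have h5 : -r ≤ -Ystar n ω := by linarith
        linarith
  -- bound on the difference process
  have hD : ∀ (ω : Ω) (k : ℕ), |Y k ω - Ystar k ω| ≤ c * B k ω := by
    intro ω k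
    induction k with
    | zero =>
      rw [hstar0, sub_self, abs_zero]
      exact mul_nonneg hc0.le (hB0 0 ω)
    | succ k ih =>
      have hBm := hBmono ω (Nat.le_succ k)
      have hcB : c * B k ω ≤ c * B (k + 1) ω := mul_le_mul_of_nonneg_left hBm hc0.le
      have hBk0 := hB0 k ω
      have habs := abs_le.mp ih
      have hcBk : c * B k ω = 2 * B k ω + |β| * B k ω := by rw [hcdef]; ring
      have habsb := abs_nonneg β
      have hbBk : 0 ≤ |β| * B k ω := mul_nonneg habsb hBk0
      rw [hTAR.recursion k ω, hstar k ω, abs_le]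
      by_cases h1 : r < Y k ω <;> by_cases h2 : r < Ystar k ω
      · rw [if_pos h1, if_pos h2, one_mul]
        constructor
        · linarith [habs.1]
        · linarith [habs.2]
      · rw [if_pos h1, if_neg h2, one_mul]
        push_neg at h2
        have hz := hZlow ω k h2
        have hrB := hBr k ω
        have h3 : -|r| ≤ r := neg_abs_le r
        constructor
        · linarith [habs.1]
        · linarith [habs.2]
      · rw [if_neg h1, if_pos h2]
        push_neg at h1
        have hy := hYlow ω k h1
        have hy0 : Y k ω ≤ 0 := le_trans h1 hr
        have t : β * Y k ω ≤ Y k ω + B k ω - β * B k ω := by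
          nlinarith [mul_nonneg (show (0:ℝ) ≤ 1 - β by linarith)
            (show (0:ℝ) ≤ B k ω + Y k ω by linarith)]
        have t2 : Y k ω ≤ β * Y k ω := by
          nlinarith [mul_nonneg (show (0:ℝ) ≤ 1 - β by linarith)
            (show (0:ℝ) ≤ -(Y k ω) by linarith)]
        have hβb : -|β| ≤ β := neg_abs_le β
        have hbB : -(|β| * B k ω) ≤ β * B k ω := by
          nlinarith [mul_le_mul_of_nonneg_right hβb hBk0]
        constructor
        · linarith [habs.1]
        · linarith [habs.2]
      · rw [if_neg h1, if_neg h2]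
        push_neg at h1
        push_neg at h2
        have hy := hYlow ω k h1
        have hz := hZlow ω k h2
        have hy0 : Y k ω ≤ 0 := le_trans h1 hr
        have hz0 : Ystar k ω ≤ 0 := le_trans h2 hr
        have hrB := hBr k ω
        have h3 : -|r| ≤ r := neg_abs_le r
        have hyabs : |Y k ω| ≤ B k ω := abs_le.mpr ⟨by linarith, by linarith⟩
        have hmul : |β * Y k ω| ≤ |β| * B k ω := by
          rw [abs_mul]
          exact mul_le_mul_of_nonneg_left hyabs habsb
        have p1 := le_abs_self (β * Y k ω)
        have p2 := neg_abs_le (β * Y k ω)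
        constructor
        · linarith
        · linarith
  -- integrability facts
  have memℒp_eps : ∀ j, MemLp (ε j) 2 μ := fun j =>
    (hTAR.ident 1 j).memLp_snd hTAR.sq_int
  have int_sq_eps : ∀ j, Integrable (fun ω => (ε j ω) ^ 2) μ := fun j =>
    (memℒp_eps j).integrable_sq
  have hInt0 : ∀ n : ℕ, 0 ≤ ∫ ω, (⨆ k ∈ Finset.Icc 1 n, (Y k ω - Ystar k ω) ^ 2) ∂μ := by
    intro n
    apply integral_nonneg
    intro ω
    exact Real.iSup_nonneg fun k => Real.iSup_nonneg fun _ => sq_nonneg _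
  -- truncated second moments
  have meas_φ : ∀ (j : ℕ) (M : ℝ), Measurable fun ω => max ((ε j ω) ^ 2 - M) 0 := fun j M =>
    (((hTAR.meas_eps j).pow_const 2).sub measurable_const).max measurable_const
  have Iφ : ∀ (j : ℕ) (M : ℝ), 0 ≤ M → Integrable (fun ω => max ((ε j ω) ^ 2 - M) 0) μ := by
    intro j M hM
    refine Integrable.mono' (int_sq_eps j) (meas_φ j M).aestronglyMeasurable
      (ae_of_all _ fun ω => ?_)
    rw [Real.norm_eq_abs, abs_of_nonneg (le_max_right _ _)]
    exact max_le (by linarith) (sq_nonneg _)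
  have hφeq : ∀ (j : ℕ) (M : ℝ), ∫ ω, max ((ε j ω) ^ 2 - M) 0 ∂μ
      = ∫ ω, max ((ε 1 ω) ^ 2 - M) 0 ∂μ := by
    intro j M
    have mφ : Measurable fun x : ℝ => max (x ^ 2 - M) 0 :=
      ((measurable_id.pow_const 2).sub measurable_const).max measurable_const
    have := ((hTAR.ident j 1).comp mφ).integral_eq
    simpa [Function.comp] using this
  -- the key estimate
  have key : ∀ (M : ℝ), 0 ≤ M → ∀ n : ℕ,
      (∫ ω, (⨆ k ∈ Finset.Icc 1 n, (Y k ω - Ystar k ω) ^ 2) ∂μ)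
        ≤ (3 * c ^ 2 * K ^ 2 + 3 * c ^ 2 * S ^ 2 * M + 3 * c ^ 2 * (∫ ω, (Y 0 ω) ^ 2 ∂μ))
          + n * (3 * c ^ 2 * S ^ 2 * ∫ ω, max ((ε 1 ω) ^ 2 - M) 0 ∂μ) := by
    intro M hM n
    set g : Ω → ℝ := fun ω => (3 * c ^ 2 * K ^ 2 + 3 * c ^ 2 * S ^ 2 * M)
        + 3 * c ^ 2 * (Y 0 ω) ^ 2
        + 3 * c ^ 2 * S ^ 2 * ∑ j ∈ Finset.Icc 1 n, max ((ε j ω) ^ 2 - M) 0 with hg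
    have i1 : Integrable (fun ω => (3 * c ^ 2 * K ^ 2 + 3 * c ^ 2 * S ^ 2 * M)
        + 3 * c ^ 2 * (Y 0 ω) ^ 2) μ :=
      (integrable_const _).add (hY0.integrable_sq.const_mul _)
    have i2 : Integrable (fun ω =>
        3 * c ^ 2 * S ^ 2 * ∑ j ∈ Finset.Icc 1 n, max ((ε j ω) ^ 2 - M) 0) μ :=
      (integrable_finset_sum _ fun j _ => Iφ j M hM).const_mul _
    have hgi : Integrable g μ := i1.add i2
    have hmono : (∫ ω, (⨆ k ∈ Finset.Icc 1 n, (Y k ω - Ystar k ω) ^ 2) ∂μ)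
        ≤ ∫ ω, g ω ∂μ := by
      refine integral_mono_of_nonneg (ae_of_all _ fun ω => ?_) hgi (ae_of_all _ fun ω => ?_)
      · exact Real.iSup_nonneg fun k => Real.iSup_nonneg fun _ => sq_nonneg _
      · have hsup : (⨆ k ∈ Finset.Icc 1 n, (Y k ω - Ystar k ω) ^ 2) ≤ (c * B n ω) ^ 2 := by
          refine Real.iSup_le (fun k => Real.iSup_le (fun hk => ?_) (sq_nonneg _)) (sq_nonneg _)
          have hk' : k ≤ n := (Finset.mem_Icc.mp hk).2
          have hle : |Y k ω - Ystar k ω| ≤ c * B n ω :=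
            le_trans (hD ω k) (mul_le_mul_of_nonneg_left (hBmono ω hk') hc0.le)
          calc (Y k ω - Ystar k ω) ^ 2 = |Y k ω - Ystar k ω| ^ 2 := (sq_abs _).symm
            _ ≤ (c * B n ω) ^ 2 := pow_le_pow_left₀ (abs_nonneg _) hle 2
        have hBn2 : (B n ω) ^ 2
            ≤ 3 * K ^ 2 + 3 * (Y 0 ω) ^ 2 + 3 * (S ^ 2 * (E n ω) ^ 2) := by
          have hBeq : B n ω = K + |Y 0 ω| + S * E n ω := by simp only [hB]
          rw [hBeq]
          nlinarith [sq_nonneg (K - |Y 0 ω|), sq_nonneg (K - S * E n ω),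
            sq_nonneg (|Y 0 ω| - S * E n ω), sq_abs (Y 0 ω)]
        have hE2 : (E n ω) ^ 2 ≤ M + ∑ j ∈ Finset.Icc 1 n, max ((ε j ω) ^ 2 - M) 0 := by
          simp only [hE]
          exact tarRMax_sq_le (fun j => ε j ω) M hM n
        calc (⨆ k ∈ Finset.Icc 1 n, (Y k ω - Ystar k ω) ^ 2) ≤ (c * B n ω) ^ 2 := hsup
          _ = c ^ 2 * (B n ω) ^ 2 := by ring
          _ ≤ c ^ 2 * (3 * K ^ 2 + 3 * (Y 0 ω) ^ 2 + 3 * (S ^ 2 * (E n ω) ^ 2)) :=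
            mul_le_mul_of_nonneg_left hBn2 (sq_nonneg c)
          _ ≤ c ^ 2 * (3 * K ^ 2 + 3 * (Y 0 ω) ^ 2
              + 3 * (S ^ 2 * (M + ∑ j ∈ Finset.Icc 1 n, max ((ε j ω) ^ 2 - M) 0))) := by
            have h5 : S ^ 2 * (E n ω) ^ 2
                ≤ S ^ 2 * (M + ∑ j ∈ Finset.Icc 1 n, max ((ε j ω) ^ 2 - M) 0) :=
              mul_le_mul_of_nonneg_left hE2 (sq_nonneg S)
            exact mul_le_mul_of_nonneg_left (by linarith) (sq_nonneg c)
          _ = g ω := by rw [hg]; ring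
    have hgeq : ∫ ω, g ω ∂μ = (3 * c ^ 2 * K ^ 2 + 3 * c ^ 2 * S ^ 2 * M
        + 3 * c ^ 2 * (∫ ω, (Y 0 ω) ^ 2 ∂μ))
        + n * (3 * c ^ 2 * S ^ 2 * ∫ ω, max ((ε 1 ω) ^ 2 - M) 0 ∂μ) := by
      rw [hg]
      rw [integral_add i1 i2, integral_add (integrable_const _)
        (hY0.integrable_sq.const_mul _), integral_const, integral_const_mul, integral_const_mul,
        integral_finset_sum _ fun j _ => Iφ j M hM]
      have hsum : ∑ j ∈ Finset.Icc 1 n, (∫ ω, max ((ε j ω) ^ 2 - M) 0 ∂μ)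
          = (n : ℝ) * ∫ ω, max ((ε 1 ω) ^ 2 - M) 0 ∂μ := by
        rw [Finset.sum_congr rfl fun j _ => hφeq j M, Finset.sum_const, Nat.card_Icc]
        simp [nsmul_eq_mul]
      rw [hsum]
      simp [measure_univ]
      ring
    rw [hgeq] at hmono
    exact hmono
  -- the truncated moment tends to zero
  have hlim : Tendsto (fun m : ℕ => ∫ ω, max ((ε 1 ω) ^ 2 - (m : ℝ)) 0 ∂μ) atTop (𝓝 0) := by
    have := tendsto_integral_of_dominated_convergence (μ := μ)
      (F := fun (m : ℕ) ω => max ((ε 1 ω) ^ 2 - (m : ℝ)) 0) (f := fun _ => (0 : ℝ))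
      (bound := fun ω => (ε 1 ω) ^ 2)
      (fun m => (meas_φ 1 (m : ℝ)).aestronglyMeasurable)
      (int_sq_eps 1)
      (fun m => ae_of_all _ fun ω => by
        rw [Real.norm_eq_abs, abs_of_nonneg (le_max_right _ _)]
        refine max_le ?_ (sq_nonneg _)
        show (ε 1 ω) ^ 2 - (m : ℝ) ≤ (ε 1 ω) ^ 2
        have : (0 : ℝ) ≤ (m : ℝ) := Nat.cast_nonneg m
        linarith)
      (ae_of_all _ fun ω => by
        have hev : (fun m : ℕ => max ((ε 1 ω) ^ 2 - (m : ℝ)) 0) =ᶠ[atTop]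
            (fun _ => (0 : ℝ)) := by
          filter_upwards [eventually_ge_atTop (Nat.ceil ((ε 1 ω) ^ 2))] with m hm
          have h1 : (ε 1 ω) ^ 2 ≤ (m : ℝ) :=
            le_trans (Nat.le_ceil _) (Nat.cast_le.mpr hm)
          exact max_eq_right (by linarith)
        exact tendsto_const_nhds.congr' hev.symm)
    simpa using this
  -- conclusion
  rw [Metric.tendsto_atTop]
  intro δ hδ
  have hq : Tendsto (fun m : ℕ => 3 * c ^ 2 * S ^ 2
      * ∫ ω, max ((ε 1 ω) ^ 2 - (m : ℝ)) 0 ∂μ) atTop (𝓝 0) := by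
    simpa using hlim.const_mul (3 * c ^ 2 * S ^ 2)
  obtain ⟨m, hm⟩ := (hq.eventually_lt_const (half_pos hδ)).exists
  obtain ⟨N, hN⟩ := Filter.eventually_atTop.mp
    ((tendsto_const_div_atTop_nhds_zero_nat (3 * c ^ 2 * K ^ 2 + 3 * c ^ 2 * S ^ 2 * (m : ℝ)
      + 3 * c ^ 2 * (∫ ω, (Y 0 ω) ^ 2 ∂μ))).eventually_lt_const (half_pos hδ))
  refine ⟨max N 1, fun n hn => ?_⟩
  have hn1 : 1 ≤ n := le_trans (le_max_right N 1) hn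
  have hnN : N ≤ n := le_trans (le_max_left N 1) hn
  have hnpos : (0 : ℝ) < (n : ℝ) := by exact_mod_cast hn1
  have hn0 : (n : ℝ) ≠ 0 := ne_of_gt hnpos
  have hxnn : 0 ≤ (∫ ω, (⨆ k ∈ Finset.Icc 1 n, (Y k ω - Ystar k ω) ^ 2) ∂μ) / n :=
    div_nonneg (hInt0 n) hnpos.le
  rw [Real.dist_eq, sub_zero, abs_of_nonneg hxnn]
  have hkey := key (m : ℝ) (Nat.cast_nonneg m) n
  calc (∫ ω, (⨆ k ∈ Finset.Icc 1 n, (Y k ω - Ystar k ω) ^ 2) ∂μ) / n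
      ≤ ((3 * c ^ 2 * K ^ 2 + 3 * c ^ 2 * S ^ 2 * (m : ℝ)
          + 3 * c ^ 2 * (∫ ω, (Y 0 ω) ^ 2 ∂μ))
        + n * (3 * c ^ 2 * S ^ 2 * ∫ ω, max ((ε 1 ω) ^ 2 - (m : ℝ)) 0 ∂μ)) / n := by
        gcongr
    _ = (3 * c ^ 2 * K ^ 2 + 3 * c ^ 2 * S ^ 2 * (m : ℝ)
          + 3 * c ^ 2 * (∫ ω, (Y 0 ω) ^ 2 ∂μ)) / n
        + (3 * c ^ 2 * S ^ 2 * ∫ ω, max ((ε 1 ω) ^ 2 - (m : ℝ)) 0 ∂μ) := by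
        field_simp
    _ < δ / 2 + δ / 2 := add_lt_add (hN n hnN) hm
    _ = δ := add_halves δ

end
end
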